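/- arXiv:1909.10687 — 3 statements merged into one kernel-verified Lean document; each statement's English description precedes it below -/
import Mathlib

section
/- The space ℱ = {u : ℝ^d → ℝ : u ∈ L²(ℝ^d, m(dx)), Ê(u,u) < ∞} equipped with the norm ‖u‖²_ℱ = ‖u‖²_{L²(ℝ^d, m)} + Ê(u,u) is a Hilbert space (i.e. the norm comes from an inner product and the space is complete). -/
open MeasureTheory Set Filter
open scoped ENNReal Topology

noncomputable section

abbrev Euc (d : ℕ) := EuclideanSpace ℝ (Fin d)

def muDens (d : ℕ) (D : Set (Euc d)) (k : Euc d → Euc d → ℝ) (x : Euc d) : ℝ≥0∞ :=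
  ∫⁻ y in D, ENNReal.ofReal (k x y)

def mMeas (d : ℕ) (D : Set (Euc d)) (k : Euc d → Euc d → ℝ) : Measure (Euc d) :=
  volume.restrict D + (volume.restrict Dᶜ).withDensity (muDens d D k)

/-- The energy `Ê(u,u)` as an `ℝ≥0∞`-valued integral. -/
def hatE (d : ℕ) (D : Set (Euc d)) (k : Euc d → Euc d → ℝ) (u : Euc d → ℝ) : ℝ≥0∞ :=
  (1 / 2 : ℝ≥0∞) * ∫⁻ p in ((univ : Set (Euc d × Euc d)) \ (Dᶜ ×ˢ Dᶜ)),
    ENNReal.ofReal ((u p.1 - u p.2) ^ 2 * k p.1 p.2)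

/-- The energy `Ê(u,u)` as a real integral. -/
def hatEr (d : ℕ) (D : Set (Euc d)) (k : Euc d → Euc d → ℝ) (u : Euc d → ℝ) : ℝ :=
  (1 / 2 : ℝ) * ∫ p in ((univ : Set (Euc d × Euc d)) \ (Dᶜ ×ˢ Dᶜ)),
    (u p.1 - u p.2) ^ 2 * k p.1 p.2

/-- Membership in `ℱ`. -/
def memF (d : ℕ) (D : Set (Euc d)) (k : Euc d → Euc d → ℝ) (u : Euc d → ℝ) : Prop :=
  Measurable u ∧ MemLp u 2 (mMeas d D k) ∧ hatE d D k u < ⊤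

/-- The squared `ℱ`-norm: `‖u‖²_ℱ = ‖u‖²_{L²(m)} + Ê(u,u)`. -/
def normFsq (d : ℕ) (D : Set (Euc d)) (k : Euc d → Euc d → ℝ) (u : Euc d → ℝ) : ℝ :=
  (∫ x, u x ^ 2 ∂(mMeas d D k)) + hatEr d D k u

-- helpers
def Sreg (d : ℕ) (D : Set (Euc d)) : Set (Euc d × Euc d) :=
  (univ : Set (Euc d × Euc d)) \ (Dᶜ ×ˢ Dᶜ)

def eInt (d : ℕ) (k : Euc d → Euc d → ℝ) (u : Euc d → ℝ) (p : Euc d × Euc d) : ℝ :=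
  (u p.1 - u p.2) ^ 2 * k p.1 p.2

def Len (d : ℕ) (D : Set (Euc d)) (k : Euc d → Euc d → ℝ) (u : Euc d → ℝ) : ℝ≥0∞ :=
  ∫⁻ p in Sreg d D, ENNReal.ofReal (eInt d k u p)

lemma hatE_eq (d D k u) : hatE d D k u = (1/2 : ℝ≥0∞) * Len d D k u := rfl
lemma hatEr_eq (d D k u) : hatEr d D k u = (1/2 : ℝ) * ∫ p in Sreg d D, eInt d k u p := rfl

variable {d : ℕ} {D : Set (Euc d)} {k : Euc d → Euc d → ℝ} {j : ℝ → ℝ}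

lemma k_meas (hjmeas : Measurable j) (hk : ∀ x y, k x y = j (dist x y)) :
    Measurable (fun p : Euc d × Euc d => k p.1 p.2) := by
  have : (fun p : Euc d × Euc d => k p.1 p.2) = fun p => j (dist p.1 p.2) := by
    funext p; exact hk _ _
  rw [this]; exact hjmeas.comp measurable_dist

lemma eInt_nonneg (hjpos : ∀ r : ℝ, 0 < r → 0 < j r) (hk : ∀ x y, k x y = j (dist x y))
    (u : Euc d → ℝ) (p : Euc d × Euc d) : 0 ≤ eInt d k u p := by
  rcases eq_or_ne p.1 p.2 with h | h
  · simp [eInt, h]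
  · exact mul_nonneg (sq_nonneg _) (le_of_lt (by rw [hk]; exact hjpos _ (dist_pos.2 h)))

lemma eInt_meas (hjmeas : Measurable j) (hk : ∀ x y, k x y = j (dist x y))
    {u : Euc d → ℝ} (hu : Measurable u) : Measurable (eInt d k u) := by
  exact (((hu.comp measurable_fst).sub (hu.comp measurable_snd)).pow_const 2).mul
    (k_meas hjmeas hk)

lemma hatE_lt_top_iff {u : Euc d → ℝ} : hatE d D k u < ⊤ ↔ Len d D k u < ⊤ := by
  rw [hatE_eq]
  constructor
  · intro h
    by_contra hc
    rw [not_lt, top_le_iff] at hc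
    rw [hc, ENNReal.mul_top (by norm_num)] at h
    exact (lt_irrefl _ h)
  · intro h
    exact ENNReal.mul_lt_top (by norm_num) h

lemma integrable_eInt (hjmeas : Measurable j) (hk : ∀ x y, k x y = j (dist x y))
    (hjpos : ∀ r : ℝ, 0 < r → 0 < j r)
    {u : Euc d → ℝ} (hu : Measurable u) (hE : hatE d D k u < ⊤) :
    Integrable (eInt d k u) (volume.restrict (Sreg d D)) := by
  refine ⟨(eInt_meas hjmeas hk hu).aestronglyMeasurable, ?_⟩
  rw [hasFiniteIntegral_iff_ofReal (ae_of_all _ (eInt_nonneg hjpos hk u))]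
  exact hatE_lt_top_iff.1 hE

lemma hatEr_eq_toReal (hjmeas : Measurable j) (hk : ∀ x y, k x y = j (dist x y))
    (hjpos : ∀ r : ℝ, 0 < r → 0 < j r)
    {u : Euc d → ℝ} (hu : Measurable u) :
    hatEr d D k u = (hatE d D k u).toReal := by
  rw [hatEr_eq, hatE_eq,
    integral_eq_lintegral_of_nonneg_ae (ae_of_all _ (eInt_nonneg hjpos hk u))
      (eInt_meas hjmeas hk hu).aestronglyMeasurable, ENNReal.toReal_mul]
  norm_num
  rfl

lemma hatEr_nonneg (hjpos : ∀ r : ℝ, 0 < r → 0 < j r) (hk : ∀ x y, k x y = j (dist x y))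
    (u : Euc d → ℝ) : 0 ≤ hatEr d D k u := by
  rw [hatEr_eq]
  have := integral_nonneg (μ := volume.restrict (Sreg d D)) (f := eInt d k u) (eInt_nonneg hjpos hk u)
  linarith

lemma eInt_comb_le (hjpos : ∀ r : ℝ, 0 < r → 0 < j r) (hk : ∀ x y, k x y = j (dist x y))
    (u v : Euc d → ℝ) {c : ℝ} (hc : c ^ 2 ≤ 1) (p : Euc d × Euc d) :
    ENNReal.ofReal (eInt d k (u + c • v) p) ≤
      2 * ENNReal.ofReal (eInt d k u p) + 2 * ENNReal.ofReal (eInt d k v p) := by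
  rcases eq_or_ne p.1 p.2 with h | h
  · have : eInt d k (u + c • v) p = 0 := by simp [eInt, h]
    simp [this]
  · have hK : 0 < k p.1 p.2 := by rw [hk]; exact hjpos _ (dist_pos.2 h)
    set a := u p.1 - u p.2 with ha
    set b := v p.1 - v p.2 with hb
    have h2 : (a + c * b) ^ 2 ≤ 2 * a ^ 2 + 2 * b ^ 2 := by
      nlinarith [sq_nonneg (a - c*b), sq_nonneg b, sq_nonneg (a + c*b), sq_nonneg (c*b - a)]
    have goal_eq : eInt d k (u + c • v) p = (a + c * b) ^ 2 * k p.1 p.2 := by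
      simp only [eInt, Pi.add_apply, Pi.smul_apply, smul_eq_mul]; ring
    have e2 : 2 * eInt d k u p + 2 * eInt d k v p = (2 * a ^ 2 + 2 * b ^ 2) * k p.1 p.2 := by
      simp only [eInt]; ring
    have h1 : eInt d k (u + c • v) p ≤ 2 * eInt d k u p + 2 * eInt d k v p := by
      rw [goal_eq, e2]; exact mul_le_mul_of_nonneg_right h2 hK.le
    calc ENNReal.ofReal (eInt d k (u + c • v) p)
        ≤ ENNReal.ofReal (2 * eInt d k u p + 2 * eInt d k v p) := ENNReal.ofReal_le_ofReal h1
      _ = ENNReal.ofReal (2 * eInt d k u p) + ENNReal.ofReal (2 * eInt d k v p) :=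
          ENNReal.ofReal_add (mul_nonneg (by norm_num) (eInt_nonneg hjpos hk u p))
            (mul_nonneg (by norm_num) (eInt_nonneg hjpos hk v p))
      _ = 2 * ENNReal.ofReal (eInt d k u p) + 2 * ENNReal.ofReal (eInt d k v p) := by
          rw [ENNReal.ofReal_mul (by norm_num : (0:ℝ) ≤ 2), ENNReal.ofReal_mul (by norm_num : (0:ℝ) ≤ 2)]
          norm_num

lemma Len_comb_le (hjpos : ∀ r : ℝ, 0 < r → 0 < j r) (hk : ∀ x y, k x y = j (dist x y))
    (hjmeas : Measurable j) {u v : Euc d → ℝ} (hu : Measurable u) (hv : Measurable v)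
    {c : ℝ} (hc : c ^ 2 ≤ 1) :
    Len d D k (u + c • v) ≤ 2 * Len d D k u + 2 * Len d D k v := by
  have mu : Measurable (fun p => ENNReal.ofReal (eInt d k u p)) :=
    (eInt_meas hjmeas hk hu).ennreal_ofReal
  have mv : Measurable (fun p => ENNReal.ofReal (eInt d k v p)) :=
    (eInt_meas hjmeas hk hv).ennreal_ofReal
  calc Len d D k (u + c • v)
      ≤ ∫⁻ p in Sreg d D, (2 * ENNReal.ofReal (eInt d k u p) + 2 * ENNReal.ofReal (eInt d k v p)) :=
        lintegral_mono (fun p => eInt_comb_le hjpos hk u v hc p)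
    _ = 2 * Len d D k u + 2 * Len d D k v := by
        rw [lintegral_add_left (mu.const_mul 2), lintegral_const_mul _ mu,
          lintegral_const_mul _ mv]
        rfl

lemma hatE_add_le (hjpos : ∀ r : ℝ, 0 < r → 0 < j r) (hk : ∀ x y, k x y = j (dist x y))
    (hjmeas : Measurable j) {u v : Euc d → ℝ} (hu : Measurable u) (hv : Measurable v) :
    hatE d D k (u + v) ≤ 2 * hatE d D k u + 2 * hatE d D k v := by
  have h : u + v = u + (1 : ℝ) • v := by simp
  rw [h, hatE_eq, hatE_eq, hatE_eq]
  calc (1/2 : ℝ≥0∞) * Len d D k (u + (1:ℝ) • v)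
      ≤ (1/2 : ℝ≥0∞) * (2 * Len d D k u + 2 * Len d D k v) :=
        mul_le_mul_right (Len_comb_le hjpos hk hjmeas hu hv (by norm_num)) _
    _ = 2 * ((1/2 : ℝ≥0∞) * Len d D k u) + 2 * ((1/2 : ℝ≥0∞) * Len d D k v) := by ring

lemma hatE_sub_le (hjpos : ∀ r : ℝ, 0 < r → 0 < j r) (hk : ∀ x y, k x y = j (dist x y))
    (hjmeas : Measurable j) {u v : Euc d → ℝ} (hu : Measurable u) (hv : Measurable v) :
    hatE d D k (u - v) ≤ 2 * hatE d D k u + 2 * hatE d D k v := by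
  have h : u - v = u + (-1 : ℝ) • v := by
    funext x; simp [sub_eq_add_neg]
  rw [h, hatE_eq, hatE_eq, hatE_eq]
  calc (1/2 : ℝ≥0∞) * Len d D k (u + (-1:ℝ) • v)
      ≤ (1/2 : ℝ≥0∞) * (2 * Len d D k u + 2 * Len d D k v) :=
        mul_le_mul_right (Len_comb_le hjpos hk hjmeas hu hv (by norm_num)) _
    _ = 2 * ((1/2 : ℝ≥0∞) * Len d D k u) + 2 * ((1/2 : ℝ≥0∞) * Len d D k v) := by ring

lemma parallelogram (hjpos : ∀ r : ℝ, 0 < r → 0 < j r) (hk : ∀ x y, k x y = j (dist x y))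
    (hjmeas : Measurable j) {u v : Euc d → ℝ} (hu : memF d D k u) (hv : memF d D k v) :
    normFsq d D k (u + v) + normFsq d D k (u - v) =
      2 * normFsq d D k u + 2 * normFsq d D k v := by
  obtain ⟨hum, hu2, huE⟩ := hu
  obtain ⟨hvm, hv2, hvE⟩ := hv
  set m := mMeas d D k
  -- L² part
  have iu : Integrable (fun x => u x ^ 2) m := hu2.integrable_sq
  have iv : Integrable (fun x => v x ^ 2) m := hv2.integrable_sq
  have iuv : Integrable (fun x => (u + v) x ^ 2) m := (hu2.add hv2).integrable_sq
  have iuv' : Integrable (fun x => (u - v) x ^ 2) m := (hu2.sub hv2).integrable_sq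
  have hL2 : (∫ x, (u + v) x ^ 2 ∂m) + (∫ x, (u - v) x ^ 2 ∂m)
      = 2 * (∫ x, u x ^ 2 ∂m) + 2 * (∫ x, v x ^ 2 ∂m) := by
    rw [← integral_add iuv iuv']
    have : (fun x => (u + v) x ^ 2 + (u - v) x ^ 2)
        = fun x => 2 * u x ^ 2 + 2 * v x ^ 2 := by
      funext x; simp only [Pi.add_apply, Pi.sub_apply]; ring
    rw [this, integral_add (iu.const_mul 2) (iv.const_mul 2),
      integral_const_mul, integral_const_mul]
  -- energy part
  have hEuv : hatE d D k (u + v) < ⊤ :=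
    lt_of_le_of_lt (hatE_add_le hjpos hk hjmeas hum hvm)
      (ENNReal.add_lt_top.2 ⟨ENNReal.mul_lt_top (by norm_num) huE,
        ENNReal.mul_lt_top (by norm_num) hvE⟩)
  have hEuv' : hatE d D k (u - v) < ⊤ :=
    lt_of_le_of_lt (hatE_sub_le hjpos hk hjmeas hum hvm)
      (ENNReal.add_lt_top.2 ⟨ENNReal.mul_lt_top (by norm_num) huE,
        ENNReal.mul_lt_top (by norm_num) hvE⟩)
  have ieu : Integrable (eInt d k u) (volume.restrict (Sreg d D)) :=
    integrable_eInt hjmeas hk hjpos hum huE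
  have iev : Integrable (eInt d k v) (volume.restrict (Sreg d D)) :=
    integrable_eInt hjmeas hk hjpos hvm hvE
  have ieuv : Integrable (eInt d k (u + v)) (volume.restrict (Sreg d D)) :=
    integrable_eInt hjmeas hk hjpos (hum.add hvm) hEuv
  have ieuv' : Integrable (eInt d k (u - v)) (volume.restrict (Sreg d D)) :=
    integrable_eInt hjmeas hk hjpos (hum.sub hvm) hEuv'
  have hEn : hatEr d D k (u + v) + hatEr d D k (u - v)
      = 2 * hatEr d D k u + 2 * hatEr d D k v := by
    rw [hatEr_eq, hatEr_eq, hatEr_eq, hatEr_eq, ← mul_add, ← integral_add ieuv ieuv']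
    have : (fun p => eInt d k (u + v) p + eInt d k (u - v) p)
        = fun p => 2 * eInt d k u p + 2 * eInt d k v p := by
      funext p; simp only [eInt, Pi.add_apply, Pi.sub_apply]; ring
    rw [this, integral_add (ieu.const_mul 2) (iev.const_mul 2),
      integral_const_mul, integral_const_mul]
    ring
  simp only [normFsq]
  linarith

lemma muDens_meas (hjmeas : Measurable j) (hk : ∀ x y, k x y = j (dist x y)) :
    Measurable (muDens d D k) := by
  have : Measurable (Function.uncurry fun x y => ENNReal.ofReal (k x y)) :=
    (k_meas hjmeas hk).ennreal_ofReal
  exact Measurable.lintegral_prod_right (ν := volume.restrict D) this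

lemma muDens_pos (hDopen : IsOpen D) (hDbdd : Bornology.IsBounded D) (hne : D.Nonempty)
    (hjpos : ∀ r : ℝ, 0 < r → 0 < j r)
    (hjmono : ∀ r s : ℝ, 0 < r → r ≤ s → j s ≤ j r) (hjmeas : Measurable j)
    (hk : ∀ x y, k x y = j (dist x y)) {x : Euc d} (hx : x ∉ D) :
    0 < muDens d D k x := by
  obtain ⟨r, hball⟩ := hDbdd.subset_closedBall x
  set R := max r 1 with hR
  have hRpos : (0:ℝ) < R := lt_of_lt_of_le one_pos (le_max_right _ _)
  have hbound : ∀ y ∈ D, ENNReal.ofReal (j R) ≤ ENNReal.ofReal (k x y) := by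
    intro y hy
    have hne' : y ≠ x := fun h => hx (h ▸ hy)
    have hdpos : 0 < dist x y := dist_pos.2 (Ne.symm hne')
    have hdle : dist x y ≤ R := by
      have := hball hy
      rw [Metric.mem_closedBall] at this
      rw [dist_comm]
      exact this.trans (le_max_left _ _)
    exact ENNReal.ofReal_le_ofReal (by rw [hk]; exact hjmono _ _ hdpos hdle)
  have h1 : ENNReal.ofReal (j R) * volume D ≤ muDens d D k x := by
    rw [← setLIntegral_const D (ENNReal.ofReal (j R))]
    exact setLIntegral_mono_ae ((k_meas hjmeas hk).comp measurable_prodMk_left).ennreal_ofReal.aemeasurable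
      (ae_of_all _ hbound)
  refine lt_of_lt_of_le ?_ h1
  exact ENNReal.mul_pos (ne_of_gt (ENNReal.ofReal_pos.2 (hjpos _ hRpos)))
    (ne_of_gt (hDopen.measure_pos volume hne))

lemma vol_ac (hDopen : IsOpen D) (hDbdd : Bornology.IsBounded D) (hne : D.Nonempty)
    (hjpos : ∀ r : ℝ, 0 < r → 0 < j r)
    (hjmono : ∀ r s : ℝ, 0 < r → r ≤ s → j s ≤ j r) (hjmeas : Measurable j)
    (hk : ∀ x y, k x y = j (dist x y)) :
    (volume : Measure (Euc d)) ≪ mMeas d D k := by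
  refine Measure.AbsolutelyContinuous.mk (fun s hs h0 => ?_)
  have hDc : MeasurableSet Dᶜ := hDopen.measurableSet.compl
  rw [mMeas, Measure.add_apply] at h0
  obtain ⟨h1, h2⟩ := add_eq_zero.1 h0
  rw [Measure.restrict_apply hs] at h1
  rw [withDensity_apply _ hs, Measure.restrict_restrict hs] at h2
  have h3 : ∀ᵐ y ∂(volume : Measure (Euc d)), y ∈ s ∩ Dᶜ → muDens d D k y = 0 :=
    (setLIntegral_eq_zero_iff (hs.inter hDc) (muDens_meas hjmeas hk)).1 h2
  have h4 : ∀ᵐ y ∂(volume : Measure (Euc d)), y ∉ s ∩ Dᶜ := by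
    refine h3.mono fun y hy hmem => ?_
    exact absurd (hy hmem)
      (ne_of_gt (muDens_pos hDopen hDbdd hne hjpos hjmono hjmeas hk hmem.2))
  have h5 : volume (s ∩ Dᶜ) = 0 := by
    have := h4
    rw [ae_iff] at this
    simpa [Set.inter_def] using this
  refine le_antisymm ?_ zero_le
  calc volume s ≤ volume (s ∩ D) + volume (s ∩ Dᶜ) := by
        refine le_trans (measure_mono ?_) (measure_union_le _ _)
        intro y hy; by_cases h : y ∈ D
        · exact Or.inl ⟨hy, h⟩
        · exact Or.inr ⟨hy, h⟩
    _ = 0 := by rw [h1, h5, add_zero]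
    _ ≤ 0 := le_refl _

lemma ae_pair {P : Euc d → Prop} (h : ∀ᵐ x ∂(volume : Measure (Euc d)), P x) :
    ∀ᵐ p ∂(volume : Measure (Euc d × Euc d)), P p.1 ∧ P p.2 := by
  obtain ⟨N, hsub, hNm, hN0⟩ := exists_measurable_superset_of_null h
  rw [ae_iff]
  refine measure_mono_null (fun p hp => ?_) (?_ : volume ((N ×ˢ univ) ∪ (univ ×ˢ N)) = 0)
  · simp only [mem_setOf_eq, not_and_or] at hp
    rcases hp with hp | hp
    · exact Or.inl ⟨hsub hp, mem_univ _⟩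
    · exact Or.inr ⟨mem_univ _, hsub hp⟩
  · refine measure_union_null ?_ ?_ <;>
      rw [Measure.volume_eq_prod, Measure.prod_prod] <;> simp [hN0]

lemma fatou_ae {α : Type*} [MeasurableSpace α] {ρ : Measure α} {fk : ℕ → α → ℝ≥0∞}
    (hm : ∀ n, Measurable (fk n)) {f : α → ℝ≥0∞}
    (h : ∀ᵐ x ∂ρ, Tendsto (fun n => fk n x) atTop (𝓝 (f x))) :
    ∫⁻ x, f x ∂ρ ≤ liminf (fun n => ∫⁻ x, fk n x ∂ρ) atTop := by
  have : ∫⁻ x, f x ∂ρ = ∫⁻ x, liminf (fun n => fk n x) atTop ∂ρ :=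
    lintegral_congr_ae (h.mono fun x hx => hx.liminf_eq.symm)
  rw [this]
  exact lintegral_liminf_le hm

def L2e (d : ℕ) (D : Set (Euc d)) (k : Euc d → Euc d → ℝ) (u : Euc d → ℝ) : ℝ≥0∞ :=
  ∫⁻ x, ENNReal.ofReal (u x ^ 2) ∂(mMeas d D k)

lemma int_sq_eq {u : Euc d → ℝ} (hu : AEStronglyMeasurable u (mMeas d D k)) :
    ∫ x, u x ^ 2 ∂(mMeas d D k) = (L2e d D k u).toReal :=
  integral_eq_lintegral_of_nonneg_ae (ae_of_all _ fun x => sq_nonneg _)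
    (hu.pow 2)

lemma L2e_lt_top {u : Euc d → ℝ} (hu2 : MemLp u 2 (mMeas d D k)) : L2e d D k u < ⊤ := by
  have h := hu2.integrable_sq.hasFiniteIntegral
  rwa [hasFiniteIntegral_iff_ofReal (ae_of_all _ fun x => sq_nonneg _)] at h

lemma Len_eq_two_hatE (u : Euc d → ℝ) : Len d D k u = 2 * hatE d D k u := by
  rw [hatE_eq, ← mul_assoc]
  norm_num
  rw [ENNReal.mul_inv_cancel (by norm_num) (by norm_num), one_mul]

lemma Lp_norm_sq {α : Type*} [MeasurableSpace α] {μ : Measure α} (f : Lp ℝ 2 μ) :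
    ‖f‖ ^ 2 = ∫ x, (f x) ^ 2 ∂μ := by
  rw [← real_inner_self_eq_norm_sq, MeasureTheory.L2.inner_def]
  congr 1; funext x; simp [RCLike.inner_apply, sq]

set_option maxHeartbeats 1000000 in
lemma complete_nonempty (hDopen : IsOpen D) (hDbdd : Bornology.IsBounded D)
    (hjpos : ∀ r : ℝ, 0 < r → 0 < j r)
    (hjmono : ∀ r s : ℝ, 0 < r → r ≤ s → j s ≤ j r) (hjmeas : Measurable j)
    (hk : ∀ x y, k x y = j (dist x y)) (hne : D.Nonempty)
    (U : ℕ → Euc d → ℝ) (hU : ∀ n, memF d D k (U n))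
    (hCau : ∀ ε : ℝ, 0 < ε → ∃ N : ℕ, ∀ p ≥ N, ∀ q ≥ N, normFsq d D k (U p - U q) < ε) :
    ∃ u : Euc d → ℝ, memF d D k u ∧
      Tendsto (fun n => normFsq d D k (U n - u)) atTop (𝓝 0) := by
  set m := mMeas d D k with hmdef
  have hmem : ∀ n, MemLp (U n) 2 m := fun n => (hU n).2.1
  have hmeas : ∀ n, Measurable (U n) := fun n => (hU n).1
  have hEfin : ∀ n, hatE d D k (U n) < ⊤ := fun n => (hU n).2.2
  -- Cauchy condition in ℝ≥0∞ form
  have key : ∀ ε : ℝ, 0 < ε → ∃ N : ℕ, ∀ p ≥ N, ∀ q ≥ N,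
      L2e d D k (U p - U q) ≤ ENNReal.ofReal ε ∧
      Len d D k (U p - U q) ≤ ENNReal.ofReal (2 * ε) := by
    intro ε hε
    obtain ⟨N, hN⟩ := hCau ε hε
    refine ⟨N, fun p hp q hq => ?_⟩
    have hpq := hN p hp q hq
    have hsm : Measurable (U p - U q) := (hmeas p).sub (hmeas q)
    have hs2 : MemLp (U p - U q) 2 m := (hmem p).sub (hmem q)
    have hEsub : hatE d D k (U p - U q) < ⊤ :=
      lt_of_le_of_lt (hatE_sub_le hjpos hk hjmeas (hmeas p) (hmeas q))
        (ENNReal.add_lt_top.2 ⟨ENNReal.mul_lt_top (by norm_num) (hEfin p),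
          ENNReal.mul_lt_top (by norm_num) (hEfin q)⟩)
    rw [normFsq, int_sq_eq hsm.aestronglyMeasurable,
      hatEr_eq_toReal hjmeas hk hjpos hsm] at hpq
    have t1 : (0:ℝ) ≤ (L2e d D k (U p - U q)).toReal := ENNReal.toReal_nonneg
    have t2 : (0:ℝ) ≤ (hatE d D k (U p - U q)).toReal := ENNReal.toReal_nonneg
    constructor
    · rw [ENNReal.le_ofReal_iff_toReal_le (L2e_lt_top hs2).ne hε.le]; linarith
    · rw [Len_eq_two_hatE]
      have hE : hatE d D k (U p - U q) ≤ ENNReal.ofReal ε := by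
        rw [ENNReal.le_ofReal_iff_toReal_le hEsub.ne hε.le]; linarith
      calc 2 * hatE d D k (U p - U q) ≤ 2 * ENNReal.ofReal ε := mul_le_mul_right hE 2
        _ = ENNReal.ofReal (2 * ε) := by
            rw [ENNReal.ofReal_mul (by norm_num : (0:ℝ) ≤ 2)]; norm_num
  -- Lp setup
  haveI : Fact ((1:ℝ≥0∞) ≤ 2) := ⟨by norm_num⟩
  set F : ℕ → Lp ℝ 2 m := fun n => MemLp.toLp (U n) (hmem n) with hFdef
  have hFsub : ∀ p q : ℕ, ‖F p - F q‖ ^ 2 = ∫ x, (U p - U q) x ^ 2 ∂m := by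
    intro p q
    rw [Lp_norm_sq]
    refine integral_congr_ae ?_
    filter_upwards [Lp.coeFn_sub (F p) (F q), (hmem p).coeFn_toLp, (hmem q).coeFn_toLp]
      with x h1 h2 h3
    rw [h1, Pi.sub_apply]; simp only [hFdef, h2, h3, Pi.sub_apply]
  have hcauchy : CauchySeq F := by
    rw [Metric.cauchySeq_iff]
    intro ε hε
    obtain ⟨N, hN⟩ := hCau (ε ^ 2) (by positivity)
    refine ⟨N, fun p hp q hq => ?_⟩
    rw [dist_eq_norm]
    refine lt_of_pow_lt_pow_left₀ 2 hε.le ?_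
    rw [hFsub p q]
    have := hN p hp q hq
    rw [normFsq] at this
    have h2 := hatEr_nonneg (D := D) hjpos hk (U p - U q)
    linarith
  obtain ⟨G, hG⟩ := cauchySeq_tendsto_of_complete hcauchy
  have htend : Tendsto (fun n => eLpNorm (U n - ⇑G) 2 m) atTop (𝓝 0) := by
    have h := (Lp.tendsto_Lp_iff_tendsto_eLpNorm' F G).1 hG
    refine h.congr fun n => eLpNorm_congr_ae ?_
    filter_upwards [(hmem n).coeFn_toLp] with x h1
    simp only [Pi.sub_apply, hFdef, h1]
  have hmeasG := Lp.aestronglyMeasurable G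
  have hinm : TendstoInMeasure m (fun n => U n) atTop ⇑G :=
    tendstoInMeasure_of_tendsto_eLpNorm (by norm_num)
      (fun n => (hmeas n).aestronglyMeasurable) hmeasG htend
  obtain ⟨ns, hns_mono, hns_ae⟩ := hinm.exists_seq_tendsto_ae
  set u : Euc d → ℝ := hmeasG.mk ⇑G with hudef
  have humeas : Measurable u := hmeasG.stronglyMeasurable_mk.measurable
  have hGu : ⇑G =ᵐ[m] u := hmeasG.ae_eq_mk
  have hu2 : MemLp u 2 m := (Lp.memLp G).ae_eq hGu
  have hae_m : ∀ᵐ x ∂m, Tendsto (fun i => U (ns i) x) atTop (𝓝 (u x)) := by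
    filter_upwards [hns_ae, hGu] with x h1 h2
    rwa [h2] at h1
  have hac := vol_ac hDopen hDbdd hne hjpos hjmono hjmeas hk
  have hae_v : ∀ᵐ x ∂(volume : Measure (Euc d)),
      Tendsto (fun i => U (ns i) x) atTop (𝓝 (u x)) := hae_m.filter_mono hac.ae_le
  -- Fatou claims
  have claim_Len : ∀ (w : Euc d → ℝ), Measurable w → ∀ c : ℝ≥0∞,
      (∀ᶠ i in atTop, Len d D k (w - U (ns i)) ≤ c) → Len d D k (w - u) ≤ c := by
    intro w hw c hev
    have hprod : ∀ᵐ p ∂(volume.restrict (Sreg d D)),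
        Tendsto (fun i => ENNReal.ofReal (eInt d k (w - U (ns i)) p)) atTop
          (𝓝 (ENNReal.ofReal (eInt d k (w - u) p))) := by
      refine ae_restrict_of_ae ?_
      filter_upwards [ae_pair hae_v] with p hp
      obtain ⟨h1, h2⟩ := hp
      have hT : Tendsto (fun i => ((w p.1 - U (ns i) p.1) - (w p.2 - U (ns i) p.2)) ^ 2
          * k p.1 p.2) atTop
          (𝓝 (((w p.1 - u p.1) - (w p.2 - u p.2)) ^ 2 * k p.1 p.2)) :=
        ((((tendsto_const_nhds.sub h1).sub (tendsto_const_nhds.sub h2)).pow 2).mul_const _)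
      have := (ENNReal.continuous_ofReal.tendsto _).comp hT
      simpa only [eInt, Pi.sub_apply, Function.comp_def] using this
    have hF := fatou_ae (ρ := volume.restrict (Sreg d D))
      (fk := fun i => fun p => ENNReal.ofReal (eInt d k (w - U (ns i)) p))
      (fun i => (eInt_meas hjmeas hk (hw.sub (hmeas (ns i)))).ennreal_ofReal) hprod
    refine le_trans hF (liminf_le_of_frequently_le hev.frequently)
  have claim_L2 : ∀ (w : Euc d → ℝ), Measurable w → ∀ c : ℝ≥0∞,
      (∀ᶠ i in atTop, L2e d D k (w - U (ns i)) ≤ c) → L2e d D k (w - u) ≤ c := by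
    intro w hw c hev
    have hptw : ∀ᵐ x ∂m,
        Tendsto (fun i => ENNReal.ofReal ((w x - U (ns i) x) ^ 2)) atTop
          (𝓝 (ENNReal.ofReal ((w x - u x) ^ 2))) := by
      filter_upwards [hae_m] with x hx
      exact (ENNReal.continuous_ofReal.tendsto _).comp
        ((tendsto_const_nhds.sub hx).pow 2)
    have hF := fatou_ae (ρ := m)
      (fk := fun i => fun x => ENNReal.ofReal ((w x - U (ns i) x) ^ 2))
      (fun i => ((hw.sub (hmeas (ns i))).pow_const 2).ennreal_ofReal)
      (f := fun x => ENNReal.ofReal ((w x - u x) ^ 2)) hptw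
    exact le_trans hF (liminf_le_of_frequently_le hev.frequently)
  -- membership of u in F
  obtain ⟨N₁, hN₁⟩ := key 1 one_pos
  have hevN₁ : ∀ᶠ i in atTop, Len d D k (U N₁ - U (ns i)) ≤ ENNReal.ofReal (2 * 1) := by
    filter_upwards [eventually_ge_atTop N₁] with i hi
    exact (hN₁ N₁ le_rfl (ns i) (hi.trans hns_mono.le_apply)).2
  have hLen_sub : Len d D k (U N₁ - u) ≤ ENNReal.ofReal (2 * 1) :=
    claim_Len (U N₁) (hmeas N₁) _ hevN₁
  have hueq : u = U N₁ + (-1 : ℝ) • (U N₁ - u) := by funext x; simp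
  have hLen_u : Len d D k u < ⊤ := by
    rw [hueq]
    refine lt_of_le_of_lt
      (Len_comb_le hjpos hk hjmeas (hmeas N₁) ((hmeas N₁).sub humeas) (by norm_num)) ?_
    exact ENNReal.add_lt_top.2
      ⟨ENNReal.mul_lt_top (by norm_num) (hatE_lt_top_iff.1 (hEfin N₁)),
       ENNReal.mul_lt_top (by norm_num) (lt_of_le_of_lt hLen_sub ENNReal.ofReal_lt_top)⟩
  refine ⟨u, ⟨humeas, hu2, hatE_lt_top_iff.2 hLen_u⟩, ?_⟩
  rw [Metric.tendsto_atTop]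
  intro ε hε
  obtain ⟨N, hN⟩ := key (ε / 6) (by linarith)
  refine ⟨N, fun n hn => ?_⟩
  have hev1 : ∀ᶠ i in atTop, L2e d D k (U n - U (ns i)) ≤ ENNReal.ofReal (ε / 6) := by
    filter_upwards [eventually_ge_atTop N] with i hi
    exact (hN n hn (ns i) (hi.trans hns_mono.le_apply)).1
  have hev2 : ∀ᶠ i in atTop, Len d D k (U n - U (ns i)) ≤ ENNReal.ofReal (2 * (ε / 6)) := by
    filter_upwards [eventually_ge_atTop N] with i hi
    exact (hN n hn (ns i) (hi.trans hns_mono.le_apply)).2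
  have h1 := claim_L2 (U n) (hmeas n) _ hev1
  have h2 := claim_Len (U n) (hmeas n) _ hev2
  have hnumeas : Measurable (U n - u) := (hmeas n).sub humeas
  have b1 : ∫ x, (U n - u) x ^ 2 ∂m ≤ ε / 6 := by
    rw [int_sq_eq hnumeas.aestronglyMeasurable]
    exact ENNReal.toReal_le_of_le_ofReal (by linarith) h1
  have b2 : hatEr d D k (U n - u) ≤ ε / 3 := by
    rw [hatEr_eq_toReal hjmeas hk hjpos hnumeas]
    refine ENNReal.toReal_le_of_le_ofReal (by linarith) ?_
    have h3 : 2 * hatE d D k (U n - u) ≤ ENNReal.ofReal (2 * (ε / 6)) := by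
      rw [← Len_eq_two_hatE]; exact h2
    have h4 : (2:ℝ) * (ε / 6) = ε / 3 := by ring
    rw [h4] at h3
    exact le_trans (le_mul_of_one_le_left zero_le one_le_two) h3
  have hnn : 0 ≤ normFsq d D k (U n - u) :=
    add_nonneg (integral_nonneg fun x => sq_nonneg _) (hatEr_nonneg hjpos hk _)
  rw [Real.dist_eq, sub_zero, abs_of_nonneg hnn]
  have hle : normFsq d D k (U n - u) ≤ ε / 6 + ε / 3 := add_le_add b1 b2
  linarith


lemma mMeas_empty (k : Euc d → Euc d → ℝ) : mMeas d (∅ : Set (Euc d)) k = 0 := by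
  rw [mMeas]
  have h2 : muDens d (∅ : Set (Euc d)) k = 0 := by
    funext x; simp [muDens]
  rw [Measure.restrict_empty, h2, withDensity_zero, add_zero]

lemma hatE_empty (u : Euc d → ℝ) : hatE d (∅ : Set (Euc d)) k u = 0 := by
  simp [hatE, univ_prod_univ]

lemma hatEr_empty (u : Euc d → ℝ) : hatEr d (∅ : Set (Euc d)) k u = 0 := by
  simp [hatEr, univ_prod_univ]

lemma normFsq_empty (u : Euc d → ℝ) : normFsq d (∅ : Set (Euc d)) k u = 0 := by
  simp [normFsq, mMeas_empty, hatEr_empty]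

/-- `(ℱ, ‖·‖_ℱ)` is a Hilbert space: the squared norm satisfies the
parallelogram identity (so the norm comes from an inner product), and the space is
complete: every Cauchy sequence converges in `ℱ`. -/
theorem statement4 (d : ℕ)
    (D : Set (Euc d)) (hDopen : IsOpen D) (hDbdd : Bornology.IsBounded D)
    (hbd : volume (frontier D) = 0)
    (j : ℝ → ℝ) (hjpos : ∀ r : ℝ, 0 < r → 0 < j r)
    (hjmono : ∀ r s : ℝ, 0 < r → r ≤ s → j s ≤ j r) (hjmeas : Measurable j)
    (k : Euc d → Euc d → ℝ) (hk : ∀ x y, k x y = j (dist x y)) :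
    (∀ u v : Euc d → ℝ, memF d D k u → memF d D k v →
      normFsq d D k (u + v) + normFsq d D k (u - v) =
        2 * normFsq d D k u + 2 * normFsq d D k v) ∧
    (∀ U : ℕ → Euc d → ℝ, (∀ n, memF d D k (U n)) →
      (∀ ε : ℝ, 0 < ε → ∃ N : ℕ, ∀ p ≥ N, ∀ q ≥ N, normFsq d D k (U p - U q) < ε) →
      ∃ u : Euc d → ℝ, memF d D k u ∧
        Tendsto (fun n => normFsq d D k (U n - u)) atTop (𝓝 0)) := by
  refine ⟨fun u v hu hv => parallelogram hjpos hk hjmeas hu hv, ?_⟩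
  intro U hU hCau
  rcases eq_empty_or_nonempty D with hD | hne
  · subst hD
    refine ⟨0, ⟨measurable_const, MeasureTheory.MemLp.zero, ?_⟩, ?_⟩
    · rw [hatE_empty]; simp
    · have h0 : (fun n => normFsq d ∅ k (U n - 0)) = fun _ => (0:ℝ) :=
        funext fun n => normFsq_empty _
      rw [h0]; exact tendsto_const_nhds
  · exact complete_nonempty hDopen hDbdd hjpos hjmono hjmeas hk hne U hU hCau
end
end

section
/- Let u ∈ ℱ solve the Dirichlet problem with exterior data φ (so Ê(u,v) = 0 for all v ∈ ℱ_D and u = φ on D^c), and let v ∈ ℱ with v = χ on D^c. Then Ê(u,v) = ∫_{D^c} Ñu(x) χ(x) μ(x) dx, where Ñu(x) = μ(x)⁻¹ ∫_D (u(x)−u(y)) k(x,y) dy. In other words, the Dirichlet-to-Neumann operator N satisfies Nφ = Ñu. -/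
open MeasureTheory Set
open scoped ENNReal

noncomputable section

/-- `μ(x) = ∫_D k(x,y) dy` as a real number. -/
def muR (d : ℕ) (D : Set (Euc d)) (k : Euc d → Euc d → ℝ) (x : Euc d) : ℝ :=
  ∫ y in D, k x y

def hatEb (d : ℕ) (D : Set (Euc d)) (k : Euc d → Euc d → ℝ) (u v : Euc d → ℝ) : ℝ :=
  (1 / 2 : ℝ) * ∫ p in ((univ : Set (Euc d × Euc d)) \ (Dᶜ ×ˢ Dᶜ)),
    (u p.1 - u p.2) * (v p.1 - v p.2) * k p.1 p.2

/-- The normalized non-local normal derivative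
`Ñu(x) = μ(x)⁻¹ ∫_D (u(x) - u(y)) k(x,y) dy`. -/
def tildeN (d : ℕ) (D : Set (Euc d)) (k : Euc d → Euc d → ℝ) (u : Euc d → ℝ)
    (x : Euc d) : ℝ :=
  (muR d D k x)⁻¹ * ∫ y in D, (u x - u y) * k x y

lemma st10.integrableOn_swap_iff {d : ℕ} {f : Euc d × Euc d → ℝ} {s t : Set (Euc d)} :
    IntegrableOn (fun p => f p.swap) (t ×ˢ s) volume ↔ IntegrableOn f (s ×ˢ t) volume := by
  rw [IntegrableOn, IntegrableOn, Measure.volume_eq_prod, ← Measure.prod_restrict,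
    ← Measure.prod_restrict]
  exact integrable_swap_iff

lemma st10.setIntegral_swap {d : ℕ} (f : Euc d × Euc d → ℝ) (s t : Set (Euc d)) :
    ∫ p in s ×ˢ t, f p = ∫ p in t ×ˢ s, f p.swap := by
  rw [Measure.volume_eq_prod, ← Measure.prod_restrict, ← Measure.prod_restrict]
  exact (integral_prod_swap f).symm

/-- if `u ∈ ℱ` solves the Dirichlet problem with exterior data `φ`
(`Ê(u,v) = 0` for all `v ∈ ℱ_D` and `u = φ` on `Dᶜ`) and `v ∈ ℱ` has `v = χ` on `Dᶜ`,
then `Ê(u,v) = ∫_{Dᶜ} Ñu(x) χ(x) μ(x) dx`, i.e. the Dirichlet-to-Neumann operator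
satisfies `Nφ = Ñu`. -/
theorem statement10 (d : ℕ)
    (D : Set (Euc d)) (hDopen : IsOpen D) (hDbdd : Bornology.IsBounded D)
    (hbd : volume (frontier D) = 0)
    (j : ℝ → ℝ) (hjpos : ∀ r : ℝ, 0 < r → 0 < j r)
    (hjmono : ∀ r s : ℝ, 0 < r → r ≤ s → j s ≤ j r) (hjmeas : Measurable j)
    (k : Euc d → Euc d → ℝ) (hk : ∀ x y, k x y = j (dist x y))
    (φ χ : Euc d → ℝ) (u v : Euc d → ℝ)
    (hu : memF d D k u) (hv : memF d D k v)
    (huφ : ∀ x ∈ Dᶜ, u x = φ x) (hvχ : ∀ x ∈ Dᶜ, v x = χ x)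
    (hharm : ∀ w : Euc d → ℝ, Measurable w → hatE d D k w < ⊤ →
      w =ᵐ[volume.restrict Dᶜ] 0 → hatEb d D k u w = 0) :
    hatEb d D k u v = ∫ x in Dᶜ, tildeN d D k u x * χ x * muR d D k x := by
  classical
  obtain ⟨humeas, huL2, huE⟩ := hu
  obtain ⟨hvmeas, hvL2, hvE⟩ := hv
  have hDm : MeasurableSet D := hDopen.measurableSet
  have hDcm : MeasurableSet Dᶜ := hDm.compl
  have hksymm : ∀ x y, k x y = k y x := fun x y => by rw [hk, hk, dist_comm]
  have hkpos : ∀ {x y : Euc d}, x ≠ y → 0 < k x y := fun {x y} hxy => by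
    rw [hk]; exact hjpos _ (dist_pos.2 hxy)
  have hKmeas : Measurable fun p : Euc d × Euc d => k p.1 p.2 := by
    have h : (fun p : Euc d × Euc d => k p.1 p.2) = fun p => j (dist p.1 p.2) :=
      funext fun p => hk _ _
    rw [h]; exact hjmeas.comp measurable_dist
  set A : Set (Euc d × Euc d) := (univ : Set (Euc d × Euc d)) \ (Dᶜ ×ˢ Dᶜ) with hAdef
  have hAm : MeasurableSet A := MeasurableSet.univ.diff (hDcm.prod hDcm)
  -- membership description of A
  have hAmem : ∀ p : Euc d × Euc d, p ∈ A ↔ (p.1 ∈ D ∨ p.2 ∈ D) := by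
    intro p
    simp only [hAdef, mem_diff, mem_univ, true_and, mem_prod, mem_compl_iff]
    tauto
  have hsub1 : D ×ˢ D ⊆ A := fun p hp => (hAmem p).2 (Or.inl hp.1)
  have hsub2 : D ×ˢ Dᶜ ⊆ A := fun p hp => (hAmem p).2 (Or.inl hp.1)
  have hsub3 : Dᶜ ×ˢ D ⊆ A := fun p hp => (hAmem p).2 (Or.inr hp.2)
  -- nonnegativity of the quadratic integrand
  have hQnn : ∀ (f : Euc d → ℝ) (p : Euc d × Euc d), 0 ≤ (f p.1 - f p.2) ^ 2 * k p.1 p.2 := by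
    intro f p
    rcases eq_or_ne p.1 p.2 with h | h
    · simp [h]
    · exact mul_nonneg (sq_nonneg _) (hkpos h).le
  have hQmeas : ∀ f : Euc d → ℝ, Measurable f →
      Measurable fun p : Euc d × Euc d => (f p.1 - f p.2) ^ 2 * k p.1 p.2 := by
    intro f hf
    exact (((hf.comp measurable_fst).sub (hf.comp measurable_snd)).pow_const 2).mul hKmeas
  -- quadratic integrability from finiteness of hatE
  have hQint : ∀ f : Euc d → ℝ, Measurable f → hatE d D k f < ⊤ →
      IntegrableOn (fun p : Euc d × Euc d => (f p.1 - f p.2) ^ 2 * k p.1 p.2) A volume := by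
    intro f hf hfE
    refine ⟨(hQmeas f hf).aestronglyMeasurable, ?_⟩
    rw [hasFiniteIntegral_iff_ofReal (Filter.Eventually.of_forall fun p => hQnn f p)]
    rw [hatE] at hfE
    by_contra hcon
    push_neg at hcon
    rw [top_le_iff.1 hcon, ENNReal.mul_top (by norm_num)] at hfE
    exact lt_irrefl _ hfE
  -- bilinear integrand integrability via Cauchy-Schwarz type bound
  have habs : ∀ a b : ℝ, |a * b| ≤ a ^ 2 + b ^ 2 := by
    intro a b
    rw [abs_le]
    constructor <;> nlinarith [sq_nonneg (a - b), sq_nonneg (a + b)]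
  have hbil : ∀ (f g : Euc d → ℝ), Measurable f → Measurable g →
      IntegrableOn (fun p : Euc d × Euc d => (f p.1 - f p.2) ^ 2 * k p.1 p.2) A volume →
      IntegrableOn (fun p : Euc d × Euc d => (g p.1 - g p.2) ^ 2 * k p.1 p.2) A volume →
      IntegrableOn (fun p : Euc d × Euc d =>
        (f p.1 - f p.2) * (g p.1 - g p.2) * k p.1 p.2) A volume := by
    intro f g hf hg hfI hgI
    have hm : Measurable fun p : Euc d × Euc d =>
        (f p.1 - f p.2) * (g p.1 - g p.2) * k p.1 p.2 :=
      (((hf.comp measurable_fst).sub (hf.comp measurable_snd)).mul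
        ((hg.comp measurable_fst).sub (hg.comp measurable_snd))).mul hKmeas
    refine Integrable.mono' (hfI.add hgI) hm.aestronglyMeasurable
      (Filter.Eventually.of_forall fun p => ?_)
    rcases eq_or_ne p.1 p.2 with h | h
    · simp [h]
    · have hk0 : 0 ≤ k p.1 p.2 := (hkpos h).le
      have h1 : ‖(f p.1 - f p.2) * (g p.1 - g p.2) * k p.1 p.2‖
          = |(f p.1 - f p.2) * (g p.1 - g p.2)| * k p.1 p.2 := by
        rw [Real.norm_eq_abs, abs_mul, abs_of_nonneg hk0]
      rw [h1]
      calc |(f p.1 - f p.2) * (g p.1 - g p.2)| * k p.1 p.2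
          ≤ ((f p.1 - f p.2) ^ 2 + (g p.1 - g p.2) ^ 2) * k p.1 p.2 :=
            mul_le_mul_of_nonneg_right (habs _ _) hk0
        _ = (f p.1 - f p.2) ^ 2 * k p.1 p.2 + (g p.1 - g p.2) ^ 2 * k p.1 p.2 := by ring
  have hQu := hQint u humeas huE
  have hQv := hQint v hvmeas hvE
  -- the interior part w = v·1_D
  set w : Euc d → ℝ := D.indicator v with hwdef
  have hwmeas : Measurable w := hvmeas.indicator hDm
  have hwD : ∀ x ∈ D, w x = v x := fun x hx => indicator_of_mem hx v
  have hwDc : ∀ x ∈ Dᶜ, w x = 0 := fun x hx => indicator_of_notMem hx v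
  -- core integrability: v(x)^2 k(x,y) on Dᶜ × D
  have hmuDmeas : Measurable (muDens d D k) := by
    have h : Measurable fun p : Euc d × Euc d => ENNReal.ofReal (k p.1 p.2) :=
      hKmeas.ennreal_ofReal
    exact h.lintegral_prod_right'
  have hcoremeas : Measurable fun p : Euc d × Euc d => v p.1 ^ 2 * k p.1 p.2 :=
    ((hvmeas.comp measurable_fst).pow_const 2).mul hKmeas
  have hcore : IntegrableOn (fun p : Euc d × Euc d => v p.1 ^ 2 * k p.1 p.2) (Dᶜ ×ˢ D)
      volume := by
    refine ⟨hcoremeas.aestronglyMeasurable, ?_⟩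
    have hnn : 0 ≤ᵐ[volume.restrict (Dᶜ ×ˢ D)]
        fun p : Euc d × Euc d => v p.1 ^ 2 * k p.1 p.2 := by
      refine ae_restrict_of_forall_mem (hDcm.prod hDm) fun p hp => ?_
      have hne : p.1 ≠ p.2 := fun h => hp.1 (h ▸ hp.2)
      exact mul_nonneg (sq_nonneg _) (hkpos hne).le
    rw [hasFiniteIntegral_iff_ofReal hnn]
    have hTon : ∫⁻ p in Dᶜ ×ˢ D, ENNReal.ofReal (v p.1 ^ 2 * k p.1 p.2) ∂volume
        = ∫⁻ x in Dᶜ, ENNReal.ofReal (v x ^ 2) * muDens d D k x ∂volume := by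
      rw [Measure.volume_eq_prod, ← Measure.prod_restrict]
      rw [lintegral_prod _ (hcoremeas.ennreal_ofReal.aemeasurable)]
      refine lintegral_congr fun x => ?_
      have hmx : Measurable fun y : Euc d => ENNReal.ofReal (k x y) :=
        (hKmeas.comp measurable_prodMk_left).ennreal_ofReal
      rw [muDens, ← lintegral_const_mul (ENNReal.ofReal (v x ^ 2)) hmx]
      exact lintegral_congr fun y => ENNReal.ofReal_mul (sq_nonneg _)
    rw [hTon]
    have hwd : ∫⁻ x in Dᶜ, ENNReal.ofReal (v x ^ 2) * muDens d D k x ∂volume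
        = ∫⁻ x, ENNReal.ofReal (v x ^ 2)
            ∂((volume.restrict Dᶜ).withDensity (muDens d D k)) := by
      rw [lintegral_withDensity_eq_lintegral_mul _ hmuDmeas
        ((hvmeas.pow_const 2).ennreal_ofReal)]
      exact lintegral_congr fun x => by rw [Pi.mul_apply, mul_comm]
    rw [hwd]
    have hv2 : Integrable (fun x => v x ^ 2) (mMeas d D k) := hvL2.integrable_sq
    rw [mMeas, integrable_add_measure] at hv2
    exact hv2.2.lintegral_lt_top
  -- swapped core
  have hcore' : IntegrableOn (fun p : Euc d × Euc d => v p.2 ^ 2 * k p.1 p.2) (D ×ˢ Dᶜ)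
      volume := by
    rw [← st10.integrableOn_swap_iff]
    have h : (fun p : Euc d × Euc d =>
          (fun q : Euc d × Euc d => v q.2 ^ 2 * k q.1 q.2) p.swap)
        = fun p : Euc d × Euc d => v p.1 ^ 2 * k p.1 p.2 :=
      funext fun p => by simp only [Prod.fst_swap, Prod.snd_swap]; rw [hksymm]
    rw [h]
    exact hcore
  -- Qw integrable on A
  have hQwmeas : Measurable fun p : Euc d × Euc d => (w p.1 - w p.2) ^ 2 * k p.1 p.2 :=
    hQmeas w hwmeas
  have hQw1 : IntegrableOn (fun p : Euc d × Euc d => (w p.1 - w p.2) ^ 2 * k p.1 p.2)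
      (D ×ˢ D) volume := by
    refine IntegrableOn.congr_fun (hQv.mono_set hsub1) (fun p hp => ?_) (hDm.prod hDm)
    rw [hwD _ hp.1, hwD _ hp.2]
  have hQw2 : IntegrableOn (fun p : Euc d × Euc d => (w p.1 - w p.2) ^ 2 * k p.1 p.2)
      (D ×ˢ Dᶜ) volume := by
    refine Integrable.mono' (((hQv.mono_set hsub2).const_mul 2).add (hcore'.const_mul 2))
      hQwmeas.aestronglyMeasurable
      (ae_restrict_of_forall_mem (hDm.prod hDcm) fun p hp => ?_)
    have hne : p.1 ≠ p.2 := fun h => hp.2 (h ▸ hp.1)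
    have hk0 : 0 ≤ k p.1 p.2 := (hkpos hne).le
    simp only [Pi.add_apply]
    rw [Real.norm_eq_abs, abs_of_nonneg (hQnn w p), hwD _ hp.1, hwDc _ hp.2]
    nlinarith [mul_nonneg (sq_nonneg (v p.1 - 2 * v p.2)) hk0]
  have hQw3 : IntegrableOn (fun p : Euc d × Euc d => (w p.1 - w p.2) ^ 2 * k p.1 p.2)
      (Dᶜ ×ˢ D) volume := by
    refine Integrable.mono' (((hQv.mono_set hsub3).const_mul 2).add (hcore.const_mul 2))
      hQwmeas.aestronglyMeasurable
      (ae_restrict_of_forall_mem (hDcm.prod hDm) fun p hp => ?_)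
    have hne : p.1 ≠ p.2 := fun h => hp.1 (h ▸ hp.2)
    have hk0 : 0 ≤ k p.1 p.2 := (hkpos hne).le
    simp only [Pi.add_apply]
    rw [Real.norm_eq_abs, abs_of_nonneg (hQnn w p), hwDc _ hp.1, hwD _ hp.2]
    nlinarith [mul_nonneg (sq_nonneg (2 * v p.1 - v p.2)) hk0]
  have hAeq : A = (D ×ˢ D ∪ D ×ˢ Dᶜ) ∪ Dᶜ ×ˢ D := by
    ext p
    rw [hAmem p]
    simp only [mem_union, mem_prod, mem_compl_iff]
    tauto
  have hQw : IntegrableOn (fun p : Euc d × Euc d => (w p.1 - w p.2) ^ 2 * k p.1 p.2) A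
      volume := by
    rw [hAeq]
    exact (hQw1.union hQw2).union hQw3
  -- hatE w < ⊤ and harmonicity applies
  have hEw : hatE d D k w < ⊤ := by
    rw [hatE, ← hAdef]
    have hlt := hQw.lintegral_lt_top
    exact ENNReal.mul_lt_top (by norm_num) hlt
  have hw0 : hatEb d D k u w = 0 :=
    hharm w hwmeas hEw (ae_restrict_of_forall_mem hDcm fun x hx => hwDc x hx)
  -- the exterior part χt = v - w
  set χt : Euc d → ℝ := fun x => v x - w x with hχtdef
  have hχtD : ∀ x ∈ D, χt x = 0 := fun x hx => by simp [hχtdef, hwD x hx]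
  have hχtDc : ∀ x ∈ Dᶜ, χt x = v x := fun x hx => by simp [hχtdef, hwDc x hx]
  -- integrands
  set F : Euc d × Euc d → ℝ := fun p => (u p.1 - u p.2) * (v p.1 - v p.2) * k p.1 p.2 with hFdef
  set G : Euc d × Euc d → ℝ := fun p => (u p.1 - u p.2) * (w p.1 - w p.2) * k p.1 p.2 with hGdef
  set H : Euc d × Euc d → ℝ := fun p => (u p.1 - u p.2) * (χt p.1 - χt p.2) * k p.1 p.2
    with hHdef
  have hFint : IntegrableOn F A volume := hbil u v humeas hvmeas hQu hQv
  have hGint : IntegrableOn G A volume := hbil u w humeas hwmeas hQu hQw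
  have hFGH : ∀ p, F p = G p + H p := fun p => by
    simp only [hFdef, hGdef, hHdef, hχtdef]; ring
  have hHint : IntegrableOn H A volume := by
    have h : H = fun p => F p - G p := funext fun p => by rw [hFGH p]; ring
    rw [h]; exact hFint.sub hGint
  -- split the integral
  have hsplit : ∫ p in A, F p = (∫ p in A, G p) + ∫ p in A, H p := by
    rw [← integral_add hGint hHint]
    exact integral_congr_ae (Filter.Eventually.of_forall fun p => hFGH p)
  have hG0 : ∫ p in A, G p = 0 := by
    have h := hw0
    rw [hatEb, ← hAdef] at h
    linarith [h]
  -- compute ∫_A H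
  set H₂ : Euc d × Euc d → ℝ := fun p => (u p.1 - u p.2) * v p.1 * k p.1 p.2 with hH₂def
  have hEqH3 : EqOn H H₂ (Dᶜ ×ˢ D) := by
    intro p hp
    simp only [hHdef, hH₂def, hχtDc _ hp.1, hχtD _ hp.2]
    ring
  have hH₂int : IntegrableOn H₂ (Dᶜ ×ˢ D) volume :=
    ((hHint.mono_set hsub3).congr_fun hEqH3 (hDcm.prod hDm))
  have hH1 : ∫ p in D ×ˢ D, H p = 0 := by
    rw [setIntegral_congr_fun (hDm.prod hDm) (g := fun _ => (0 : ℝ))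
      (fun p hp => by simp only [hHdef, hχtD _ hp.1, hχtD _ hp.2]; ring)]
    simp
  have hH2 : ∫ p in D ×ˢ Dᶜ, H p = ∫ p in Dᶜ ×ˢ D, H₂ p := by
    rw [st10.setIntegral_swap H D Dᶜ]
    refine setIntegral_congr_fun (hDcm.prod hDm) fun p hp => ?_
    simp only [hHdef, hH₂def, Prod.fst_swap, Prod.snd_swap, hχtDc _ hp.1, hχtD _ hp.2]
    rw [hksymm p.2 p.1]
    ring
  have hH3 : ∫ p in Dᶜ ×ˢ D, H p = ∫ p in Dᶜ ×ˢ D, H₂ p :=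
    setIntegral_congr_fun (hDcm.prod hDm) hEqH3
  have hdisj12 : Disjoint (D ×ˢ D) (D ×ˢ Dᶜ) := by
    rw [Set.disjoint_left]
    rintro p ⟨-, h2⟩ ⟨-, h2'⟩
    exact h2' h2
  have hdisj3 : Disjoint (D ×ˢ D ∪ D ×ˢ Dᶜ) (Dᶜ ×ˢ D) := by
    rw [Set.disjoint_left]
    rintro p (⟨h1, -⟩ | ⟨h1, -⟩) ⟨h1', -⟩ <;> exact h1' h1
  have hHA : ∫ p in A, H p = 2 * ∫ p in Dᶜ ×ˢ D, H₂ p := by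
    rw [hAeq, setIntegral_union hdisj3 (hDcm.prod hDm)
        ((hHint.mono_set hsub1).union (hHint.mono_set hsub2))
        (hHint.mono_set hsub3),
      setIntegral_union hdisj12 (hDm.prod hDcm) (hHint.mono_set hsub1)
        (hHint.mono_set hsub2),
      hH1, hH2, hH3]
    ring
  -- so far: hatEb u v = ∫_{Dᶜ×D} H₂
  have hmain : hatEb d D k u v = ∫ p in Dᶜ ×ˢ D, H₂ p := by
    rw [hatEb, ← hAdef]
    have h : ∫ p in A, (u p.1 - u p.2) * (v p.1 - v p.2) * k p.1 p.2 = ∫ p in A, F p := rfl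
    rw [h, hsplit, hG0, hHA]
    ring
  -- Fubini
  have hFub : ∫ p in Dᶜ ×ˢ D, H₂ p
      = ∫ x in Dᶜ, v x * ∫ y in D, (u x - u y) * k x y := by
    have hint : IntegrableOn H₂ (Dᶜ ×ˢ D)
        ((volume : Measure (Euc d)).prod (volume : Measure (Euc d))) := by
      rw [← Measure.volume_eq_prod]
      exact hH₂int
    have h := setIntegral_prod (μ := (volume : Measure (Euc d)))
      (ν := (volume : Measure (Euc d))) H₂ hint
    rw [Measure.volume_eq_prod, h]
    refine setIntegral_congr_fun hDcm fun x hx => ?_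
    rw [← integral_const_mul]
    refine setIntegral_congr_fun hDm fun y hy => ?_
    simp only [hH₂def]
    ring
  -- final identification of the integrand a.e.
  have hae : ∀ᵐ x ∂volume, x ∉ frontier D := by
    rw [ae_iff]
    simpa using hbd
  have hfinal : ∫ x in Dᶜ, v x * ∫ y in D, (u x - u y) * k x y
      = ∫ x in Dᶜ, tildeN d D k u x * χ x * muR d D k x := by
    refine setIntegral_congr_ae hDcm (hae.mono fun x hxf hxDc => ?_)
    rcases eq_or_ne (volume D) 0 with hD0 | hD0
    · have hres : volume.restrict D = (0 : Measure (Euc d)) := Measure.restrict_eq_zero.2 hD0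
      simp [tildeN, muR, hres]
    · -- x is away from the closure of D
      have hxcl : x ∉ closure D := by
        rw [closure_eq_self_union_frontier]
        rintro (h | h)
        exacts [hxDc h, hxf h]
      have hDne : D.Nonempty := by
        rcases D.eq_empty_or_nonempty with h | h
        · rw [h] at hD0; simp at hD0
        · exact h
      have hrpos : 0 < Metric.infDist x (closure D) :=
        (isClosed_closure.notMem_iff_infDist_pos hDne.closure).1 hxcl
      have hkbd : ∀ y ∈ D, k x y ≤ j (Metric.infDist x (closure D)) := by
        intro y hy
        rw [hk]
        exact hjmono _ _ hrpos (Metric.infDist_le_dist_of_mem (subset_closure hy))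
      have hkxpos : ∀ y ∈ D, 0 < k x y := fun y hy => hkpos fun h => hxDc (h ▸ hy)
      have hkxmeas : Measurable fun y => k x y := by
        have h : (fun y => k x y) = fun y => j (dist x y) := funext fun y => hk x y
        rw [h]
        exact hjmeas.comp (measurable_const.dist measurable_id)
      have hIk : IntegrableOn (fun y => k x y) D volume := by
        refine Measure.integrableOn_of_bounded (M := j (Metric.infDist x (closure D))) hDbdd.measure_lt_top.ne
          hkxmeas.aestronglyMeasurable
          (ae_restrict_of_forall_mem hDm fun y hy => ?_)
        rw [Real.norm_eq_abs, abs_of_nonneg (hkxpos y hy).le]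
        exact hkbd y hy
      have hmuRpos : 0 < muR d D k x := by
        rw [muR, setIntegral_pos_iff_support_of_nonneg_ae
          (ae_restrict_of_forall_mem hDm fun y hy => (hkxpos y hy).le) hIk]
        refine lt_of_lt_of_le (pos_iff_ne_zero.2 hD0).bot_lt (measure_mono fun y hy => ?_)
        exact ⟨(hkxpos y hy).ne', hy⟩
      have hvx : v x = χ x := hvχ x hxDc
      rw [tildeN, ← hvx]
      field_simp
  rw [hmain, hFub, hfinal]
end
end

section
/- If v is a normal contraction of u ∈ ℱ (i.e. |v(x)−v(y)| ≤ |u(x)−u(y)| for all x,y ∈ ℝ^d and |v(x)| ≤ |u(x)| for all x), then Ê(v,v) ≤ Ê(u,u); together with the density of ℱ in L²(ℝ^d, m(dx)) and the completeness of (ℱ, ‖·‖_ℱ), the pair (Ê, ℱ) is a Dirichlet form on L²(ℝ^d, m(dx)). -/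
open MeasureTheory Set
open scoped ENNReal

noncomputable section

open Metric Filter
open scoped Topology NNReal

namespace St13

variable {d : ℕ} {D : Set (Euc d)} {j : ℝ → ℝ} {k : Euc d → Euc d → ℝ}

lemma kmeas (hjmeas : Measurable j) (hk : ∀ x y, k x y = j (dist x y)) :
    Measurable fun p : Euc d × Euc d => k p.1 p.2 := by
  have h : (fun p : Euc d × Euc d => k p.1 p.2) = fun p : Euc d × Euc d => j (dist p.1 p.2) := by
    funext p; rw [hk]
  rw [h]
  exact hjmeas.comp measurable_dist

lemma Fmeas (hjmeas : Measurable j) (hk : ∀ x y, k x y = j (dist x y)) {w : Euc d → ℝ}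
    (hw : Measurable w) :
    Measurable fun p : Euc d × Euc d => ENNReal.ofReal ((w p.1 - w p.2) ^ 2 * k p.1 p.2) := by
  apply ENNReal.measurable_ofReal.comp
  exact (((hw.comp measurable_fst).sub (hw.comp measurable_snd)).pow_const 2).mul
    (kmeas hjmeas hk)

lemma muDens_meas (hjmeas : Measurable j) (hk : ∀ x y, k x y = j (dist x y)) :
    Measurable (muDens d D k) := by
  unfold muDens
  exact Measurable.lintegral_prod_right' (ENNReal.measurable_ofReal.comp (kmeas hjmeas hk))

lemma ofReal_sq_mul_k_mono (hjpos : ∀ r : ℝ, 0 < r → 0 < j r)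
    (hk : ∀ x y, k x y = j (dist x y)) {x y : Euc d} {a b : ℝ}
    (h : |a| ≤ |b|) (h0 : x = y → a = 0) :
    ENNReal.ofReal (a ^ 2 * k x y) ≤ ENNReal.ofReal (b ^ 2 * k x y) := by
  rcases eq_or_ne x y with rfl | hxy
  · rw [h0 rfl]; simp
  · have hkpos : 0 ≤ k x y := by rw [hk]; exact (hjpos _ (dist_pos.2 hxy)).le
    apply ENNReal.ofReal_le_ofReal
    apply mul_le_mul_of_nonneg_right _ hkpos
    calc a ^ 2 = |a| ^ 2 := (sq_abs a).symm
      _ ≤ |b| ^ 2 := pow_le_pow_left₀ (abs_nonneg a) h 2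
      _ = b ^ 2 := sq_abs b

lemma lint_offdiag_le (F : Euc d × Euc d → ℝ≥0∞) :
    ∫⁻ p in ((univ : Set (Euc d × Euc d)) \ (Dᶜ ×ˢ Dᶜ)), F p ≤
      (∫⁻ p in D ×ˢ (univ : Set (Euc d)), F p) + ∫⁻ p in (univ : Set (Euc d)) ×ˢ D, F p := by
  refine le_trans (lintegral_mono' (Measure.restrict_mono ?_ le_rfl) le_rfl)
    (lintegral_union_le _ _ _)
  rintro ⟨x, y⟩ hp
  simp only [mem_diff, mem_univ, true_and, mem_prod, mem_compl_iff, not_and_or, not_not,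
    mem_union] at hp ⊢
  tauto

lemma lint_prod_left (hD : MeasurableSet D) {F : Euc d × Euc d → ℝ≥0∞} (hF : Measurable F) :
    ∫⁻ p in D ×ˢ (univ : Set (Euc d)), F p = ∫⁻ x in D, ∫⁻ y, F (x, y) := by
  rw [Measure.volume_eq_prod, ← Measure.prod_restrict, Measure.restrict_univ]
  exact lintegral_prod _ hF.aemeasurable

lemma lint_prod_right (hD : MeasurableSet D) {F : Euc d × Euc d → ℝ≥0∞} (hF : Measurable F) :
    ∫⁻ p in (univ : Set (Euc d)) ×ˢ D, F p = ∫⁻ y in D, ∫⁻ x, F (x, y) := by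
  rw [Measure.volume_eq_prod, ← Measure.prod_restrict, Measure.restrict_univ]
  exact lintegral_prod_symm _ hF.aemeasurable

lemma lintegral_mMeas_eq (hD : MeasurableSet D) {h : Euc d → ℝ≥0∞}
    (h0 : ∀ x, x ∉ D → h x = 0) :
    ∫⁻ x, h x ∂(mMeas d D k) = ∫⁻ x in D, h x := by
  have hzero : ∫⁻ x, h x ∂((volume.restrict Dᶜ).withDensity (muDens d D k)) = 0 := by
    have hind : h = D.indicator h := by
      funext x; by_cases hx : x ∈ D
      · simp [hx]
      · simp [hx, h0 x hx]
    rw [hind, lintegral_indicator hD]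
    have : ((volume.restrict Dᶜ).withDensity (muDens d D k)).restrict D = 0 := by
      rw [Measure.restrict_eq_zero, withDensity_apply _ hD, Measure.restrict_restrict hD,
        inter_compl_self, Measure.restrict_empty, lintegral_zero_measure]
    rw [this, lintegral_zero_measure]
  rw [mMeas, lintegral_add_measure, hzero, add_zero]

lemma hatE_vanishD_le (hD : MeasurableSet D) (hjpos : ∀ r : ℝ, 0 < r → 0 < j r)
    (hjmeas : Measurable j) (hk : ∀ x y, k x y = j (dist x y)) {w : Euc d → ℝ}
    (hw : Measurable w) (h0 : ∀ x ∈ D, w x = 0) :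
    hatE d D k w ≤ ∫⁻ y in Dᶜ, ENNReal.ofReal (w y ^ 2) * muDens d D k y := by
  set F : Euc d × Euc d → ℝ≥0∞ :=
    fun p => ENNReal.ofReal ((w p.1 - w p.2) ^ 2 * k p.1 p.2) with hF
  have hFm : Measurable F := Fmeas hjmeas hk hw
  have key1 : ∀ x ∈ D, (∫⁻ y, F (x, y)) =
      ∫⁻ y in Dᶜ, ENNReal.ofReal (w y ^ 2) * ENNReal.ofReal (k x y) := by
    intro x hx
    rw [← lintegral_indicator hD.compl]
    apply lintegral_congr
    intro y
    by_cases hy : y ∈ D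
    · have : y ∉ Dᶜ := by simpa using hy
      simp [hF, indicator_of_notMem this, h0 x hx, h0 y hy]
    · have hmem : y ∈ Dᶜ := hy
      rw [indicator_of_mem hmem]
      simp only [hF]
      rw [h0 x hx, zero_sub, neg_sq, ← ENNReal.ofReal_mul (sq_nonneg _)]
  have key2 : ∀ y ∈ D, (∫⁻ x, F (x, y)) =
      ∫⁻ x in Dᶜ, ENNReal.ofReal (w x ^ 2) * ENNReal.ofReal (k x y) := by
    intro y hy
    rw [← lintegral_indicator hD.compl]
    apply lintegral_congr
    intro x
    by_cases hx : x ∈ D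
    · have : x ∉ Dᶜ := by simpa using hx
      simp [hF, indicator_of_notMem this, h0 x hx, h0 y hy]
    · have hmem : x ∈ Dᶜ := hx
      rw [indicator_of_mem hmem]
      simp only [hF]
      rw [h0 y hy, sub_zero, ← ENNReal.ofReal_mul (sq_nonneg _)]
  set T : ℝ≥0∞ := ∫⁻ y in Dᶜ, ENNReal.ofReal (w y ^ 2) * muDens d D k y with hT
  have hswap : ∀ {G : Euc d → Euc d → ℝ≥0∞}, Measurable (fun p : Euc d × Euc d => G p.1 p.2) →
      ∫⁻ a in D, ∫⁻ b in Dᶜ, G a b = ∫⁻ b in Dᶜ, ∫⁻ a in D, G a b := by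
    intro G hG
    exact lintegral_lintegral_swap hG.aemeasurable
  have hpart1 : (∫⁻ p in D ×ˢ (univ : Set (Euc d)), F p) ≤ T := by
    rw [lint_prod_left hD hFm]
    have : (∫⁻ x in D, ∫⁻ y, F (x, y)) =
        ∫⁻ x in D, ∫⁻ y in Dᶜ, ENNReal.ofReal (w y ^ 2) * ENNReal.ofReal (k x y) := by
      apply setLIntegral_congr_fun hD
      exact key1
    rw [this, hswap (G := fun x y => ENNReal.ofReal (w y ^ 2) * ENNReal.ofReal (k x y))
      ((ENNReal.measurable_ofReal.comp ((hw.comp measurable_snd).pow_const 2)).mul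
        (ENNReal.measurable_ofReal.comp (kmeas hjmeas hk)))]
    rw [hT]
    apply lintegral_mono_ae
    filter_upwards [ae_restrict_mem hD.compl] with y hy
    rw [lintegral_const_mul _ (by
      exact ENNReal.measurable_ofReal.comp ((kmeas (k := k) hjmeas hk).comp
        (measurable_id.prodMk measurable_const)))]
    apply mul_le_mul_right
    have : muDens d D k y = ∫⁻ x in D, ENNReal.ofReal (k y x) := rfl
    rw [this]
    apply le_of_eq
    apply lintegral_congr
    intro x
    rw [hk, hk, dist_comm]
  have hpart2 : (∫⁻ p in (univ : Set (Euc d)) ×ˢ D, F p) ≤ T := by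
    rw [lint_prod_right hD hFm]
    have : (∫⁻ y in D, ∫⁻ x, F (x, y)) =
        ∫⁻ y in D, ∫⁻ x in Dᶜ, ENNReal.ofReal (w x ^ 2) * ENNReal.ofReal (k x y) := by
      apply setLIntegral_congr_fun hD
      exact key2
    rw [this, hswap (G := fun y x => ENNReal.ofReal (w x ^ 2) * ENNReal.ofReal (k x y))
      ((ENNReal.measurable_ofReal.comp ((hw.comp measurable_snd).pow_const 2)).mul
        (ENNReal.measurable_ofReal.comp ((kmeas hjmeas hk).comp measurable_swap)))]
    rw [hT]
    apply lintegral_mono_ae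
    filter_upwards [ae_restrict_mem hD.compl] with x hx
    rw [lintegral_const_mul _ (by
      exact ENNReal.measurable_ofReal.comp ((kmeas (k := k) hjmeas hk).comp
        (measurable_const.prodMk measurable_id)))]
    apply mul_le_mul_right
    exact le_of_eq rfl
  calc hatE d D k w
      = (1 / 2 : ℝ≥0∞) * ∫⁻ p in ((univ : Set (Euc d × Euc d)) \ (Dᶜ ×ˢ Dᶜ)), F p := rfl
    _ ≤ (1 / 2 : ℝ≥0∞) * (T + T) :=
        mul_le_mul_right (le_trans (lint_offdiag_le F) (add_le_add hpart1 hpart2)) _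
    _ = T := by
        rw [← two_mul, ← mul_assoc, one_div,
          ENNReal.inv_mul_cancel two_ne_zero ENNReal.ofNat_ne_top, one_mul]

lemma eLpNorm_two_eq (μ : Measure (Euc d)) (h : Euc d → ℝ) :
    eLpNorm h 2 μ = (∫⁻ x, ENNReal.ofReal (h x ^ 2) ∂μ) ^ (1 / 2 : ℝ) := by
  rw [eLpNorm_eq_lintegral_rpow_enorm_toReal two_ne_zero ENNReal.ofNat_ne_top]
  rw [ENNReal.toReal_ofNat]
  congr 1
  apply lintegral_congr
  intro x
  rw [Real.enorm_eq_ofReal_abs, ENNReal.ofReal_rpow_of_nonneg (abs_nonneg _) (by norm_num)]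
  congr 1
  rw [show ((2:ℝ)) = ((2:ℕ):ℝ) by norm_num, Real.rpow_natCast, sq_abs]

lemma lintegral_sq_eq (μ : Measure (Euc d)) (h : Euc d → ℝ) :
    ∫⁻ x, ENNReal.ofReal (h x ^ 2) ∂μ = eLpNorm h 2 μ ^ (2 : ℝ) := by
  rw [eLpNorm_two_eq, ← ENNReal.rpow_mul]
  norm_num

lemma hatE_lipschitz_lt_top (hD : MeasurableSet D) (hDbdd : Bornology.IsBounded D)
    (hjpos : ∀ r : ℝ, 0 < r → 0 < j r) (hjmeas : Measurable j)
    (hjint : ∫⁻ z : Euc d, ENNReal.ofReal ((min 1 (‖z‖ ^ 2)) * j ‖z‖) < ⊤)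
    (hk : ∀ x y, k x y = j (dist x y))
    {g : Euc d → ℝ} {L : ℝ≥0} {M : ℝ} (hg : LipschitzWith L g) (hgb : ∀ x, |g x| ≤ M) :
    hatE d D k g < ⊤ := by
  set C : ℝ := max ((L : ℝ) ^ 2) (4 * M ^ 2) with hC
  have hC0 : 0 ≤ C := le_trans (sq_nonneg _) (le_max_left _ _)
  set φ : Euc d → ℝ≥0∞ := fun z => ENNReal.ofReal (C * (min 1 (‖z‖ ^ 2) * j ‖z‖)) with hφ
  set F : Euc d × Euc d → ℝ≥0∞ :=
    fun p => ENNReal.ofReal ((g p.1 - g p.2) ^ 2 * k p.1 p.2) with hFdef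
  have hFm : Measurable F := Fmeas hjmeas hk hg.continuous.measurable
  have hpt : ∀ x y : Euc d, F (x, y) ≤ φ (x - y) := by
    intro x y
    rcases eq_or_ne x y with rfl | hxy
    · simp [hFdef]
    · have hr : 0 < dist x y := dist_pos.2 hxy
      have hj : 0 ≤ j (dist x y) := (hjpos _ hr).le
      have hnorm : ‖x - y‖ = dist x y := (dist_eq_norm x y).symm
      simp only [hFdef, hφ, hnorm]
      apply ENNReal.ofReal_le_ofReal
      rw [← mul_assoc]
      apply mul_le_mul_of_nonneg_right _ (by rw [hk]; exact hj) |>.trans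
      · exact le_of_eq (by rw [hk])
      · have h1 : (g x - g y) ^ 2 ≤ (L : ℝ) ^ 2 * dist x y ^ 2 := by
          have := hg.dist_le_mul x y
          rw [Real.dist_eq] at this
          calc (g x - g y) ^ 2 = |g x - g y| ^ 2 := (sq_abs _).symm
            _ ≤ ((L : ℝ) * dist x y) ^ 2 := by
                apply pow_le_pow_left₀ (abs_nonneg _) this
            _ = (L : ℝ) ^ 2 * dist x y ^ 2 := by ring
        have h2 : (g x - g y) ^ 2 ≤ 4 * M ^ 2 := by
          have hb : |g x - g y| ≤ 2 * M := by
            calc |g x - g y| ≤ |g x| + |g y| := abs_sub _ _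
              _ ≤ 2 * M := by have := hgb x; have := hgb y; linarith
          calc (g x - g y) ^ 2 = |g x - g y| ^ 2 := (sq_abs _).symm
            _ ≤ (2 * M) ^ 2 := pow_le_pow_left₀ (abs_nonneg _) hb 2
            _ = 4 * M ^ 2 := by ring
        rcases le_or_gt (dist x y) 1 with hle | hgt
        · have hmin : min 1 (dist x y ^ 2) = dist x y ^ 2 :=
            min_eq_right (by nlinarith)
          rw [hmin]
          calc (g x - g y) ^ 2 ≤ (L : ℝ) ^ 2 * dist x y ^ 2 := h1
            _ ≤ C * dist x y ^ 2 :=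
              mul_le_mul_of_nonneg_right (le_max_left _ _) (sq_nonneg _)
        · have hmin : min 1 (dist x y ^ 2) = 1 := min_eq_left (by nlinarith)
          rw [hmin, mul_one]
          exact le_trans h2 (le_max_right _ _)
  have hφsymm : ∀ x y : Euc d, φ (x - y) = φ (y - x) := by
    intro x y; simp only [hφ]; rw [norm_sub_rev]
  have hφint : (∫⁻ z, φ z) < ⊤ := by
    have hre : ∀ z : Euc d, φ z = ENNReal.ofReal C * ENNReal.ofReal (min 1 (‖z‖ ^ 2) * j ‖z‖) := by
      intro z; simp only [hφ]; rw [ENNReal.ofReal_mul hC0]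
    rw [lintegral_congr hre, lintegral_const_mul _ (by
      apply ENNReal.measurable_ofReal.comp
      exact ((measurable_const.min (measurable_norm.pow_const 2)).mul
        (hjmeas.comp measurable_norm)))]
    exact ENNReal.mul_lt_top ENNReal.ofReal_lt_top hjint
  set I₀ : ℝ≥0∞ := ∫⁻ z, φ z with hI₀
  have htrans1 : ∀ x : Euc d, (∫⁻ y, φ (x - y)) = I₀ := by
    intro x
    rw [hI₀]
    have hsy : ∀ y : Euc d, φ (x - y) = φ (y - x) := fun y => hφsymm x y
    rw [lintegral_congr hsy]
    exact lintegral_sub_right_eq_self φ x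
  have hbound1 : (∫⁻ p in D ×ˢ (univ : Set (Euc d)), F p) ≤ volume D * I₀ := by
    rw [lint_prod_left hD hFm]
    calc (∫⁻ x in D, ∫⁻ y, F (x, y)) ≤ ∫⁻ x in D, I₀ := by
          apply lintegral_mono
          intro x
          rw [← htrans1 x]
          exact lintegral_mono fun y => hpt x y
      _ = volume D * I₀ := by rw [setLIntegral_const, mul_comm]
  have hbound2 : (∫⁻ p in (univ : Set (Euc d)) ×ˢ D, F p) ≤ volume D * I₀ := by
    rw [lint_prod_right hD hFm]
    calc (∫⁻ y in D, ∫⁻ x, F (x, y)) ≤ ∫⁻ y in D, I₀ := by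
          apply lintegral_mono
          intro y
          have hts : (∫⁻ x, φ (x - y)) = I₀ := by
            rw [hI₀]; exact lintegral_sub_right_eq_self φ y
          rw [← hts]
          exact lintegral_mono fun x => hpt x y
      _ = volume D * I₀ := by rw [setLIntegral_const, mul_comm]
  have hDfin : volume D < ⊤ := hDbdd.measure_lt_top
  have hfin : (∫⁻ p in ((univ : Set (Euc d × Euc d)) \ (Dᶜ ×ˢ Dᶜ)), F p) < ⊤ := by
    refine lt_of_le_of_lt (lint_offdiag_le F) ?_
    have h1 : volume D * I₀ < ⊤ := ENNReal.mul_lt_top hDfin hφint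
    exact lt_of_le_of_lt (add_le_add hbound1 hbound2) (ENNReal.add_lt_top.2 ⟨h1, h1⟩)
  rw [hatE]
  exact ENNReal.mul_lt_top (by norm_num) hfin

def GoodFn (d : ℕ) (D : Set (Euc d)) (g : Euc d → ℝ) : Prop :=
  ∃ L : ℝ≥0, ∃ M : ℝ, ∃ K : Set (Euc d), LipschitzWith L g ∧ (∀ x, |g x| ≤ M) ∧
    IsCompact K ∧ K ⊆ D ∧ ∀ x, x ∉ K → g x = 0

lemma elp_chain (hD : MeasurableSet D) {h : Euc d → ℝ} {B : ℝ} (hB : 0 < B)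
    {bad : Set (Euc d)} (hbad : MeasurableSet bad)
    (hpt : ∀ x ∈ D, |h x| ≤ bad.indicator (fun _ => B) x)
    {q : ℝ≥0∞} (hq : volume bad ≤ q ^ (2 : ℝ)) :
    eLpNorm h 2 (volume.restrict D) ≤ ENNReal.ofReal B * q := by
  have step1 : eLpNorm h 2 (volume.restrict D) ≤
      eLpNorm (bad.indicator fun _ => B) 2 (volume.restrict D) := by
    apply eLpNorm_mono_ae
    filter_upwards [ae_restrict_mem hD] with x hx
    rw [Real.norm_eq_abs, Real.norm_eq_abs]
    exact (hpt x hx).trans (le_abs_self _)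
  refine step1.trans ?_
  rw [eLpNorm_indicator_const hbad two_ne_zero ENNReal.ofNat_ne_top,
    Real.enorm_eq_ofReal hB.le]
  apply mul_le_mul_right
  have hmeas : (volume.restrict D) bad ≤ volume bad := by
    rw [Measure.restrict_apply hbad]
    exact measure_mono inter_subset_left
  calc (volume.restrict D) bad ^ (1 / (2 : ℝ≥0∞).toReal) =
        (volume.restrict D) bad ^ (1 / 2 : ℝ) := by rw [ENNReal.toReal_ofNat]
    _ ≤ (q ^ (2 : ℝ)) ^ (1 / 2 : ℝ) :=
        ENNReal.rpow_le_rpow (hmeas.trans hq) (by norm_num)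
    _ = q := by rw [← ENNReal.rpow_mul]; norm_num

lemma approx_indicator (hDopen : IsOpen D) (c : ℝ) {s : Set (Euc d)} (hs : MeasurableSet s)
    (hsfin : (volume.restrict D) s < ⊤) {ε : ℝ≥0∞} (hε : ε ≠ 0) :
    ∃ g : Euc d → ℝ,
      eLpNorm (g - s.indicator fun _ => c) 2 (volume.restrict D) ≤ ε ∧ GoodFn d D g := by
  have hD : MeasurableSet D := hDopen.measurableSet
  have hA : MeasurableSet (s ∩ D) := hs.inter hD
  have hAfin : volume (s ∩ D) < ⊤ := by rwa [Measure.restrict_apply hs] at hsfin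
  set B : ℝ := 2 * |c| + 1 with hBdef
  have hB : (0 : ℝ) < B := by positivity
  have hBne : ENNReal.ofReal B ≠ 0 := by
    simp [ENNReal.ofReal_eq_zero, not_le, hB]
  have hBnt : ENNReal.ofReal B ≠ ⊤ := ENNReal.ofReal_ne_top
  set q : ℝ≥0∞ := min ε 1 / ENNReal.ofReal B with hqdef
  have hminne : min ε 1 ≠ 0 := (lt_min (pos_iff_ne_zero.2 hε) zero_lt_one).ne'
  have hqne : q ≠ 0 := by
    rw [hqdef]
    simp only [ne_eq, ENNReal.div_eq_zero_iff, not_or]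
    exact ⟨hminne, hBnt⟩
  have hfinal : ENNReal.ofReal B * q ≤ ε := by
    rw [hqdef, ENNReal.mul_div_cancel hBne hBnt]
    exact min_le_left _ _
  set δ : ℝ≥0∞ := q ^ (2 : ℝ) / 2 with hδdef
  have hq2 : 2 * δ = q ^ (2 : ℝ) := by
    rw [hδdef, mul_comm, ENNReal.div_mul_cancel two_ne_zero ENNReal.ofNat_ne_top]
  have hδne : δ ≠ 0 := by
    rw [hδdef]
    simp only [ne_eq, ENNReal.div_eq_zero_iff, not_or]
    refine ⟨?_, ENNReal.ofNat_ne_top⟩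
    simp only [ENNReal.rpow_eq_zero_iff, not_or]
    push_neg
    exact ⟨fun h => absurd h hqne, fun h => by norm_num⟩
  have hδle : δ ≤ q ^ (2 : ℝ) := by
    rw [← hq2]; exact le_mul_of_one_le_left (by positivity) one_le_two
  obtain ⟨K, hKsub, hKcomp, hKdiff⟩ := hA.exists_isCompact_diff_lt hAfin.ne hδne
  have hKD : K ⊆ D := hKsub.trans inter_subset_right
  rcases K.eq_empty_or_nonempty with hKe | hKne
  · refine ⟨0, ?_, 0, 0, ∅, LipschitzWith.const 0, by simp, isCompact_empty,
      empty_subset _, fun _ _ => rfl⟩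
    have hptw : ∀ x ∈ D, |((0 : Euc d → ℝ) - s.indicator fun _ => c) x| ≤
        (s ∩ D).indicator (fun _ => B) x := by
      intro x hx
      simp only [Pi.sub_apply, Pi.zero_apply, zero_sub, abs_neg]
      by_cases hxs : x ∈ s
      · have hxm : x ∈ s ∩ D := ⟨hxs, hx⟩
        rw [indicator_of_mem hxs, indicator_of_mem hxm]
        rw [hBdef]; linarith [abs_nonneg c]
      · rw [indicator_of_notMem hxs, abs_zero]
        exact indicator_nonneg (fun _ _ => hB.le) x
    refine (elp_chain hD hB hA hptw ?_).trans hfinal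
    have hlt : volume (s ∩ D) < δ := by
      have := hKdiff; rwa [hKe, diff_empty] at this
    exact hlt.le.trans hδle
  · obtain ⟨δ', δ'pos, hδ'sub⟩ := hKcomp.exists_thickening_subset_open hDopen hKD
    have hthickfin : volume (thickening 1 K) ≠ ⊤ :=
      hKcomp.isBounded.thickening.measure_lt_top.ne
    have hlim := tendsto_measure_thickening (μ := volume) (s := K) ⟨1, one_pos, hthickfin⟩
    rw [hKcomp.isClosed.closure_eq] at hlim
    have hKfin : volume K ≠ ⊤ := hKcomp.measure_lt_top.ne
    have h1 : ∀ᶠ r in 𝓝[>] (0 : ℝ), volume (thickening r K) < volume K + δ :=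
      hlim.eventually_lt_const (ENNReal.lt_add_right hKfin hδne)
    have h2 : ∀ᶠ r in 𝓝[>] (0 : ℝ), r < δ' / 2 :=
      eventually_nhdsWithin_of_eventually_nhds (eventually_lt_nhds (by positivity))
    have h3 : ∀ᶠ r in 𝓝[>] (0 : ℝ), 0 < r := eventually_mem_nhdsWithin
    obtain ⟨r, hr1, hr2, hr3⟩ := (h1.and (h2.and h3)).exists
    have hthin : volume (thickening r K \ K) < δ :=
      measure_diff_lt_of_lt_add hKcomp.nullMeasurableSet (self_subset_thickening hr3 K)
        hKfin hr1
    set ψ : Euc d → ℝ := fun x => max (1 - infDist x K / r) 0 with hψdef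
    set g : Euc d → ℝ := fun x => c * ψ x with hgdef
    have hr0 : (0 : ℝ) < r := hr3
    have hψ0 : ∀ x, 0 ≤ ψ x := fun x => le_max_right _ _
    have hψ1 : ∀ x, ψ x ≤ 1 := by
      intro x
      apply max_le _ zero_le_one
      have : 0 ≤ infDist x K / r := div_nonneg infDist_nonneg hr0.le
      linarith
    have hgK : ∀ x ∈ K, g x = c := by
      intro x hx
      simp only [hgdef, hψdef]
      rw [infDist_zero_of_mem hx]
      norm_num
    have hgout : ∀ x, x ∉ thickening r K → g x = 0 := by
      intro x hx
      rw [mem_thickening_iff_infDist_lt hKne] at hx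
      have hge : r ≤ infDist x K := not_lt.1 hx
      have hle : 1 - infDist x K / r ≤ 0 := by
        have : 1 ≤ infDist x K / r := (one_le_div hr0).2 hge
        linarith
      simp only [hgdef, hψdef]
      rw [max_eq_right hle, mul_zero]
    have hgb : ∀ x, |g x| ≤ |c| := by
      intro x
      simp only [hgdef]
      rw [abs_mul]
      calc |c| * |ψ x| ≤ |c| * 1 :=
            mul_le_mul_of_nonneg_left
              (by rw [abs_of_nonneg (hψ0 x)]; exact hψ1 x) (abs_nonneg c)
        _ = |c| := mul_one _
    have hglip : LipschitzWith (Real.toNNReal (|c| / r)) g := by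
      apply LipschitzWith.of_dist_le_mul
      intro x y
      rw [Real.coe_toNNReal _ (div_nonneg (abs_nonneg c) hr0.le), Real.dist_eq]
      simp only [hgdef]
      rw [← mul_sub, abs_mul]
      have hinf : |infDist x K - infDist y K| ≤ dist x y := by
        rw [abs_sub_le_iff]
        constructor
        · have := infDist_le_infDist_add_dist (x := x) (y := y) (s := K); linarith
        · have := infDist_le_infDist_add_dist (x := y) (y := x) (s := K)
          rw [dist_comm] at this; linarith
      have hψdiff : |ψ x - ψ y| ≤ dist x y / r := by
        simp only [hψdef]
        refine (abs_max_sub_max_le_abs _ _ _).trans ?_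
        have heq : (1 - infDist x K / r) - (1 - infDist y K / r) =
            (infDist y K - infDist x K) / r := by ring
        rw [heq, abs_div, abs_of_pos hr0, abs_sub_comm]
        gcongr
      calc |c| * |ψ x - ψ y| ≤ |c| * (dist x y / r) :=
            mul_le_mul_of_nonneg_left hψdiff (abs_nonneg c)
        _ = |c| / r * dist x y := by ring
    have hsupp : ∀ x, x ∉ cthickening (δ' / 2) K → g x = 0 := by
      intro x hx
      by_cases hxt : x ∈ thickening r K
      · exact absurd (cthickening_mono hr2.le K
          (thickening_subset_cthickening r K hxt)) hx
      · exact hgout x hxt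
    set bad : Set (Euc d) := ((s ∩ D) \ K) ∪ (thickening r K \ K) with hbaddef
    have hbadmeas : MeasurableSet bad :=
      (hA.diff hKcomp.isClosed.measurableSet).union
        (isOpen_thickening.measurableSet.diff hKcomp.isClosed.measurableSet)
    have hptw : ∀ x ∈ D, |(g - s.indicator fun _ => c) x| ≤
        bad.indicator (fun _ => B) x := by
      intro x hx
      simp only [Pi.sub_apply]
      by_cases hxK : x ∈ K
      · rw [hgK x hxK, indicator_of_mem (hKsub hxK).1, sub_self, abs_zero]
        exact indicator_nonneg (fun _ _ => hB.le) x
      · by_cases hxs : x ∈ s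
        · have hxbad : x ∈ bad := Or.inl ⟨⟨hxs, hx⟩, hxK⟩
          rw [indicator_of_mem hxs, indicator_of_mem hxbad]
          have h1 := hgb x
          rw [hBdef]
          calc |g x - c| ≤ |g x| + |c| := abs_sub _ _
            _ ≤ 2 * |c| + 1 := by linarith
        · rw [indicator_of_notMem hxs, sub_zero]
          by_cases hxt : x ∈ thickening r K
          · have hxbad : x ∈ bad := Or.inr ⟨hxt, hxK⟩
            rw [indicator_of_mem hxbad]
            have h1 := hgb x
            rw [hBdef]; linarith [abs_nonneg c]
          · rw [hgout x hxt, abs_zero]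
            exact indicator_nonneg (fun _ _ => hB.le) x
    refine ⟨g, (elp_chain hD hB hbadmeas hptw ?_).trans hfinal,
      Real.toNNReal (|c| / r), |c|, cthickening (δ' / 2) K, hglip, hgb,
      hKcomp.cthickening,
      (cthickening_subset_thickening' δ'pos (half_lt_self δ'pos) K).trans hδ'sub,
      hsupp⟩
    calc volume bad ≤ volume ((s ∩ D) \ K) + volume (thickening r K \ K) :=
          measure_union_le _ _
      _ ≤ δ + δ := add_le_add hKdiff.le hthin.le
      _ = 2 * δ := (two_mul δ).symm
      _ = q ^ (2 : ℝ) := hq2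

end St13

/-- normal contractions operate on `(Ê, ℱ)`: if `v` is a normal contraction
of `u ∈ ℱ` then `v ∈ ℱ` and `Ê(v,v) ≤ Ê(u,u)`; moreover `ℱ` is dense in `L²(ℝ^d, m)`.
(Together with closedness, this says `(Ê, ℱ)` is a Dirichlet form on `L²(ℝ^d, m)`.) -/
theorem statement13 (d : ℕ) (hd : 2 ≤ d)
    (D : Set (Euc d)) (hDopen : IsOpen D) (hDbdd : Bornology.IsBounded D)
    (hbd : volume (frontier D) = 0)
    (j : ℝ → ℝ) (hjpos : ∀ r : ℝ, 0 < r → 0 < j r)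
    (hjmono : ∀ r s : ℝ, 0 < r → r ≤ s → j s ≤ j r) (hjmeas : Measurable j)
    (hjint : ∫⁻ z : Euc d, ENNReal.ofReal ((min 1 (‖z‖ ^ 2)) * j ‖z‖) < ⊤)
    (k : Euc d → Euc d → ℝ) (hk : ∀ x y, k x y = j (dist x y)) :
    (∀ u v : Euc d → ℝ, memF d D k u → Measurable v →
      (∀ x y, |v x - v y| ≤ |u x - u y|) → (∀ x, |v x| ≤ |u x|) →
      memF d D k v ∧ hatE d D k v ≤ hatE d D k u) ∧
    (∀ f : Euc d → ℝ, Measurable f → MemLp f 2 (mMeas d D k) →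
      ∀ ε : ℝ, 0 < ε → ∃ g : Euc d → ℝ, memF d D k g ∧
        ∫⁻ x, ENNReal.ofReal ((f x - g x) ^ 2) ∂(mMeas d D k) < ENNReal.ofReal ε) := by
  have hD : MeasurableSet D := hDopen.measurableSet
  constructor
  · -- normal contractions operate
    rintro u v ⟨humeas, huL2, huE⟩ hvmeas hcontr hbound
    have hEle : hatE d D k v ≤ hatE d D k u := by
      rw [hatE, hatE]
      apply mul_le_mul_right
      apply lintegral_mono
      intro p
      exact St13.ofReal_sq_mul_k_mono hjpos hk (hcontr p.1 p.2)
        (fun h => by rw [h, sub_self])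
    refine ⟨⟨hvmeas, ?_, lt_of_le_of_lt hEle huE⟩, hEle⟩
    exact huL2.of_le hvmeas.aestronglyMeasurable
      (Filter.Eventually.of_forall fun x => by
        rw [Real.norm_eq_abs, Real.norm_eq_abs]; exact hbound x)
  · -- density
    intro f hfmeas hf2 ε hε
    have hmuD : Measurable (muDens d D k) := St13.muDens_meas hjmeas hk
    have hfD : MemLp f 2 (volume.restrict D) := hf2.mono_measure (Measure.le_add_right le_rfl)
    set η : ℝ≥0∞ := ENNReal.ofReal (Real.sqrt (ε / 2)) with hη
    have hηne : η ≠ 0 := by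
      rw [hη]
      simp only [ne_eq, ENNReal.ofReal_eq_zero, not_le]
      exact Real.sqrt_pos.2 (by linarith)
    have h0P : ∀ (c : ℝ) ⦃s : Set (Euc d)⦄, MeasurableSet s →
        (volume.restrict D) s < ⊤ → ∀ {ε' : ℝ≥0∞}, ε' ≠ 0 →
        ∃ g : Euc d → ℝ, eLpNorm (g - s.indicator fun _ => c) 2 (volume.restrict D) ≤ ε' ∧
          St13.GoodFn d D g := by
      intro c s hs hsfin ε' hε'
      exact St13.approx_indicator hDopen c hs hsfin hε'
    have h1P : ∀ f1 f2 : Euc d → ℝ, St13.GoodFn d D f1 → St13.GoodFn d D f2 →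
        St13.GoodFn d D (f1 + f2) := by
      rintro f1 f2 ⟨L1, M1, K1, h11, h12, h13, h14, h15⟩ ⟨L2, M2, K2, h21, h22, h23, h24, h25⟩
      refine ⟨L1 + L2, M1 + M2, K1 ∪ K2, h11.add h21,
        fun x => (abs_add_le _ _).trans (add_le_add (h12 x) (h22 x)),
        h13.union h23, union_subset h14 h24, fun x hx => ?_⟩
      have e1 : f1 x = 0 := h15 x fun h => hx (Or.inl h)
      have e2 : f2 x = 0 := h25 x fun h => hx (Or.inr h)
      simp [Pi.add_apply, e1, e2]
    have h2P : ∀ f1 : Euc d → ℝ, St13.GoodFn d D f1 →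
        AEStronglyMeasurable f1 (volume.restrict D) := by
      rintro f1 ⟨L1, M1, K1, h11, -⟩
      exact h11.continuous.aestronglyMeasurable
    obtain ⟨g₁, hg₁n, hg₁P⟩ :=
      hfD.induction_dense ENNReal.ofNat_ne_top (St13.GoodFn d D) h0P h1P h2P hηne
    obtain ⟨L, M, K, hg₁lip, hg₁b, hKcomp, hKD, hg₁0⟩ := hg₁P
    have hg₁meas : Measurable g₁ := hg₁lip.continuous.measurable
    have hg₁D0 : ∀ x, x ∉ D → g₁ x = 0 := fun x hx => hg₁0 x fun hxK => hx (hKD hxK)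
    set g₂ : Euc d → ℝ := Dᶜ.indicator f with hg₂def
    have hg₂meas : Measurable g₂ := hfmeas.indicator hD.compl
    set g : Euc d → ℝ := fun x => g₁ x + g₂ x with hgdef
    have hgmeas : Measurable g := hg₁meas.add hg₂meas
    -- MemLp g
    have hmem₂ : MemLp g₂ 2 (mMeas d D k) := by
      apply hf2.of_le hg₂meas.aestronglyMeasurable
      apply Filter.Eventually.of_forall
      intro x
      rw [Real.norm_eq_abs, Real.norm_eq_abs]
      by_cases hx : x ∈ Dᶜ
      · rw [hg₂def, indicator_of_mem hx]
      · rw [hg₂def, indicator_of_notMem hx, abs_zero]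
        exact abs_nonneg _
    have hmem₁ : MemLp g₁ 2 (mMeas d D k) := by
      refine ⟨hg₁meas.aestronglyMeasurable, ?_⟩
      rw [St13.eLpNorm_two_eq]
      have hint : ∫⁻ x, ENNReal.ofReal (g₁ x ^ 2) ∂(mMeas d D k) =
          ∫⁻ x in D, ENNReal.ofReal (g₁ x ^ 2) :=
        St13.lintegral_mMeas_eq hD (fun x hx => by rw [hg₁D0 x hx]; simp)
      rw [hint]
      have hle : (∫⁻ x in D, ENNReal.ofReal (g₁ x ^ 2)) ≤ ENNReal.ofReal (M ^ 2) * volume D := by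
        calc (∫⁻ x in D, ENNReal.ofReal (g₁ x ^ 2)) ≤ ∫⁻ _x in D, ENNReal.ofReal (M ^ 2) :=
              lintegral_mono fun x => ENNReal.ofReal_le_ofReal
                (by nlinarith [hg₁b x, abs_nonneg (g₁ x), sq_abs (g₁ x)])
          _ = ENNReal.ofReal (M ^ 2) * volume D := by rw [setLIntegral_const]
      have hfin : (∫⁻ x in D, ENNReal.ofReal (g₁ x ^ 2)) ≠ ⊤ :=
        (hle.trans_lt (ENNReal.mul_lt_top ENNReal.ofReal_lt_top hDbdd.measure_lt_top)).ne
      exact ENNReal.rpow_lt_top_of_nonneg (by norm_num) hfin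
    have hmemg : MemLp g 2 (mMeas d D k) := hmem₁.add hmem₂
    -- energies
    have hEg₁ : hatE d D k g₁ < ⊤ :=
      St13.hatE_lipschitz_lt_top hD hDbdd hjpos hjmeas hjint hk hg₁lip hg₁b
    have hg₂D0 : ∀ x ∈ D, g₂ x = 0 := by
      intro x hx
      rw [hg₂def, indicator_of_notMem (by simpa using hx)]
    have hEg₂ : hatE d D k g₂ < ⊤ := by
      refine lt_of_le_of_lt (St13.hatE_vanishD_le hD hjpos hjmeas hk hg₂meas hg₂D0) ?_
      have hcongr : (∫⁻ y in Dᶜ, ENNReal.ofReal (g₂ y ^ 2) * muDens d D k y) =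
          ∫⁻ y in Dᶜ, ENNReal.ofReal (f y ^ 2) * muDens d D k y := by
        apply setLIntegral_congr_fun hD.compl
        exact fun y hy => by rw [hg₂def, indicator_of_mem hy]
      rw [hcongr]
      have hwd : (∫⁻ y in Dᶜ, ENNReal.ofReal (f y ^ 2) * muDens d D k y) =
          ∫⁻ y, ENNReal.ofReal (f y ^ 2)
            ∂((volume.restrict Dᶜ).withDensity (muDens d D k)) := by
        rw [lintegral_withDensity_eq_lintegral_mul _ hmuD
          ((hfmeas.pow_const 2).ennreal_ofReal)]
        refine lintegral_congr fun y => ?_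
        simp [Pi.mul_apply, mul_comm]
      rw [hwd]
      have hle2 : (∫⁻ y, ENNReal.ofReal (f y ^ 2)
          ∂((volume.restrict Dᶜ).withDensity (muDens d D k))) ≤
          ∫⁻ y, ENNReal.ofReal (f y ^ 2) ∂(mMeas d D k) := by
        rw [mMeas]
        exact lintegral_mono' (Measure.le_add_left le_rfl) le_rfl
      exact lt_of_le_of_lt hle2 hf2.integrable_sq.lintegral_lt_top
    have unwrap : ∀ {w : Euc d → ℝ}, hatE d D k w < ⊤ →
        (∫⁻ p in ((univ : Set (Euc d × Euc d)) \ (Dᶜ ×ˢ Dᶜ)),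
          ENNReal.ofReal ((w p.1 - w p.2) ^ 2 * k p.1 p.2)) < ⊤ := by
      intro w hw
      rw [hatE] at hw
      by_contra hI
      rw [not_lt, top_le_iff] at hI
      rw [hI, ENNReal.mul_top (by norm_num)] at hw
      exact lt_irrefl _ hw
    have hptsum : ∀ p : Euc d × Euc d,
        ENNReal.ofReal ((g p.1 - g p.2) ^ 2 * k p.1 p.2) ≤
          2 * ENNReal.ofReal ((g₁ p.1 - g₁ p.2) ^ 2 * k p.1 p.2) +
          2 * ENNReal.ofReal ((g₂ p.1 - g₂ p.2) ^ 2 * k p.1 p.2) := by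
      rintro ⟨x, y⟩
      rcases eq_or_ne x y with rfl | hxy
      · simp
      · have hknn : 0 ≤ k x y := by rw [hk]; exact (hjpos _ (dist_pos.2 hxy)).le
        have hab : (g x - g y) ^ 2 * k x y ≤
            (2 * (g₁ x - g₁ y) ^ 2 + 2 * (g₂ x - g₂ y) ^ 2) * k x y := by
          apply mul_le_mul_of_nonneg_right _ hknn
          have hsplit : g x - g y = (g₁ x - g₁ y) + (g₂ x - g₂ y) := by
            simp only [hgdef]; ring
          rw [hsplit]
          nlinarith [sq_nonneg ((g₁ x - g₁ y) - (g₂ x - g₂ y))]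
        calc ENNReal.ofReal ((g x - g y) ^ 2 * k x y) ≤
              ENNReal.ofReal ((2 * (g₁ x - g₁ y) ^ 2 + 2 * (g₂ x - g₂ y) ^ 2) * k x y) :=
              ENNReal.ofReal_le_ofReal hab
          _ = ENNReal.ofReal (2 * ((g₁ x - g₁ y) ^ 2 * k x y) +
                2 * ((g₂ x - g₂ y) ^ 2 * k x y)) := by ring_nf
          _ ≤ ENNReal.ofReal (2 * ((g₁ x - g₁ y) ^ 2 * k x y)) +
                ENNReal.ofReal (2 * ((g₂ x - g₂ y) ^ 2 * k x y)) := ENNReal.ofReal_add_le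
          _ = 2 * ENNReal.ofReal ((g₁ x - g₁ y) ^ 2 * k x y) +
                2 * ENNReal.ofReal ((g₂ x - g₂ y) ^ 2 * k x y) := by
              have h2of : ∀ t : ℝ, ENNReal.ofReal (2 * t) = 2 * ENNReal.ofReal t := fun t => by
                rw [ENNReal.ofReal_mul (by norm_num), ENNReal.ofReal_ofNat]
              rw [h2of, h2of]
    have hEg : hatE d D k g < ⊤ := by
      rw [hatE]
      apply ENNReal.mul_lt_top (by norm_num)
      calc (∫⁻ p in ((univ : Set (Euc d × Euc d)) \ (Dᶜ ×ˢ Dᶜ)),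
            ENNReal.ofReal ((g p.1 - g p.2) ^ 2 * k p.1 p.2)) ≤
            ∫⁻ p in ((univ : Set (Euc d × Euc d)) \ (Dᶜ ×ˢ Dᶜ)),
              (2 * ENNReal.ofReal ((g₁ p.1 - g₁ p.2) ^ 2 * k p.1 p.2) +
               2 * ENNReal.ofReal ((g₂ p.1 - g₂ p.2) ^ 2 * k p.1 p.2)) :=
            lintegral_mono hptsum
        _ = 2 * (∫⁻ p in ((univ : Set (Euc d × Euc d)) \ (Dᶜ ×ˢ Dᶜ)),
                ENNReal.ofReal ((g₁ p.1 - g₁ p.2) ^ 2 * k p.1 p.2)) +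
            2 * ∫⁻ p in ((univ : Set (Euc d × Euc d)) \ (Dᶜ ×ˢ Dᶜ)),
                ENNReal.ofReal ((g₂ p.1 - g₂ p.2) ^ 2 * k p.1 p.2) := by
            rw [lintegral_add_left ((St13.Fmeas hjmeas hk hg₁meas).const_mul 2),
              lintegral_const_mul 2 (St13.Fmeas hjmeas hk hg₁meas),
              lintegral_const_mul 2 (St13.Fmeas hjmeas hk hg₂meas)]
        _ < ⊤ := by
            apply ENNReal.add_lt_top.2
            exact ⟨ENNReal.mul_lt_top (by norm_num) (unwrap hEg₁),
              ENNReal.mul_lt_top (by norm_num) (unwrap hEg₂)⟩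
    refine ⟨g, ⟨hgmeas, hmemg, hEg⟩, ?_⟩
    -- the L² error
    have hvan : ∀ x, x ∉ D → ENNReal.ofReal ((f x - g x) ^ 2) = 0 := by
      intro x hx
      have h2 : g₂ x = f x := by rw [hg₂def, indicator_of_mem (by simpa using hx)]
      have h1 : g₁ x = 0 := hg₁D0 x hx
      have : f x - g x = 0 := by simp only [hgdef]; rw [h1, h2]; ring
      rw [this]; simp
    have hkey : ∫⁻ x, ENNReal.ofReal ((f x - g x) ^ 2) ∂(mMeas d D k) =
        ∫⁻ x in D, ENNReal.ofReal ((f x - g x) ^ 2) := St13.lintegral_mMeas_eq hD hvan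
    have hcong2 : (∫⁻ x in D, ENNReal.ofReal ((f x - g x) ^ 2)) =
        ∫⁻ x in D, ENNReal.ofReal ((f - g₁) x ^ 2) := by
      apply setLIntegral_congr_fun hD
      intro x hx
      have h2 : g₂ x = 0 := hg₂D0 x hx
      have : g x = g₁ x := by simp only [hgdef]; rw [h2, add_zero]
      beta_reduce
      rw [this, Pi.sub_apply]
    rw [hkey, hcong2, St13.lintegral_sq_eq]
    calc eLpNorm (f - g₁) 2 (volume.restrict D) ^ (2 : ℝ) ≤ η ^ (2 : ℝ) :=
          ENNReal.rpow_le_rpow hg₁n (by norm_num)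
      _ = ENNReal.ofReal (ε / 2) := by
          rw [hη, ENNReal.ofReal_rpow_of_nonneg (Real.sqrt_nonneg _) (by norm_num)]
          congr 1
          rw [show ((2 : ℝ)) = ((2 : ℕ) : ℝ) by norm_num, Real.rpow_natCast, sq,
            Real.mul_self_sqrt (by linarith)]
      _ < ENNReal.ofReal ε := (ENNReal.ofReal_lt_ofReal_iff hε).2 (half_lt_self hε)
end
end
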